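/- arXiv:1409.3673 — 6 statements merged into one kernel-verified Lean document; each statement's English description precedes it below -/
import Mathlib

section
/- Let λ be a probability vector in ℝⁿ and b an n×n bistochastic matrix, and let μ = λb (i.e. μⱼ = Σᵢ λᵢ b_{ij}). If the Shannon entropies satisfy H(μ) = H(λ), then for every j and all indices i, k with b_{ij} ≠ 0 and b_{kj} ≠ 0 one has λᵢ = λₖ. -/
open Matrix BigOperators ComplexOrder

/-- Entropy function `η(t) = -t log t` (with `η(0)=0` since `Real.log 0 = 0`). -/
noncomputable def eta (t : ℝ) : ℝ := -(t * Real.log t)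

/-- Von Neumann entropy of a matrix: sum of `η` over eigenvalues (0 if not Hermitian). -/
noncomputable def vnEntropy {n : ℕ} (D : Matrix (Fin n) (Fin n) ℂ) : ℝ :=
  if h : D.IsHermitian then ∑ i, eta (h.eigenvalues i) else 0

/-- Positive, unital, trace-preserving linear map on `M_n(ℂ)`. -/
def IsPUTP {n : ℕ} (Φ : Matrix (Fin n) (Fin n) ℂ →ₗ[ℂ] Matrix (Fin n) (Fin n) ℂ) : Prop :=
  (∀ x, x.PosSemidef → (Φ x).PosSemidef) ∧ Φ 1 = 1 ∧ ∀ x, (Φ x).trace = x.trace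

/-- A family of mutually orthogonal rank-one (trace-one) self-adjoint projections
summing to the identity. -/
def IsSpectralFamily {n : ℕ} (e : Fin n → Matrix (Fin n) (Fin n) ℂ) : Prop :=
  (∀ i, (e i).IsHermitian) ∧ (∀ i j, e i * e j = if i = j then e i else 0) ∧
    (∑ i, e i = 1) ∧ (∀ i, (e i).trace = 1)

theorem stmt_2 {n : ℕ} (lam mu : Fin n → ℝ)
    (hlam0 : ∀ i, 0 ≤ lam i) (hlam1 : ∑ i, lam i = 1)
    (b : Fin n → Fin n → ℝ)
    (hb0 : ∀ i j, 0 ≤ b i j) (hbrow : ∀ i, ∑ j, b i j = 1) (hbcol : ∀ j, ∑ i, b i j = 1)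
    (hmu : ∀ j, mu j = ∑ i, lam i * b i j)
    (hent : ∑ j, eta (mu j) = ∑ i, eta (lam i)) :
    ∀ j i k, b i j ≠ 0 → b k j ≠ 0 → lam i = lam k := by
  have heta : ∀ t : ℝ, eta t = Real.negMulLog t := by
    intro t; simp [eta, Real.negMulLog, neg_mul]
  -- Jensen per column
  have key : ∀ j, ∑ i, b i j • eta (lam i) ≤ eta (mu j) := by
    intro j
    have := Real.concaveOn_negMulLog.le_map_sum
      (t := Finset.univ) (w := fun i => b i j) (p := lam)
      (fun i _ => hb0 i j) (hbcol j) (fun i _ => hlam0 i)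
    simp only [smul_eq_mul] at this ⊢
    simpa [heta, hmu j, mul_comm, Finset.mul_sum] using this
  have hsum : ∑ j, ∑ i, b i j • eta (lam i) = ∑ i, eta (lam i) := by
    rw [Finset.sum_comm]
    simp only [smul_eq_mul]
    calc ∑ i, ∑ j, b i j * eta (lam i)
        = ∑ i : Fin n, (∑ j, b i j) * eta (lam i) := by
          simp [Finset.sum_mul]
      _ = ∑ i, eta (lam i) := by simp [hbrow]
  have heq : ∀ j, ∑ i, b i j • eta (lam i) = eta (mu j) := by
    have := (Finset.sum_eq_sum_iff_of_le (s := Finset.univ)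
      (fun j _ => key j)).mp (by rw [hsum, ← hent])
    exact fun j => this j (Finset.mem_univ j)
  intro j i k hi hk
  have hjeq : Real.negMulLog (∑ i, b i j • lam i)
      = ∑ i, b i j • Real.negMulLog (lam i) := by
    have := heq j
    simp only [smul_eq_mul, heta] at this ⊢
    rw [this, hmu j]
    congr 1
    exact Finset.sum_congr rfl fun i _ => mul_comm _ _
  have hall := (Real.strictConcaveOn_negMulLog.map_sum_eq_iff'
    (t := Finset.univ) (w := fun i => b i j) (p := lam)
    (fun i _ => hb0 i j) (hbcol j) (fun i _ => hlam0 i)).mp hjeq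
  rw [hall i (Finset.mem_univ i) hi, hall k (Finset.mem_univ k) hk]
end

section
/- Let λ, μ be probability vectors in ℝⁿ, arranged in decreasing order, and b a bistochastic matrix with λb = μ. If H(μ) = H(λ) (equal Shannon entropies), then also μ bᵀ = λ. -/
open Matrix BigOperators ComplexOrder

lemma sum_eq_of_le_of_sum_eq {α : Type*} [Fintype α] {f g : α → ℝ}
    (hle : ∀ i, f i ≤ g i) (hs : ∑ i, f i = ∑ i, g i) : ∀ i, f i = g i := by
  intro i
  by_contra h
  have hlt : f i < g i := lt_of_le_of_ne (hle i) h
  have := Finset.sum_lt_sum (fun j _ => hle j) ⟨i, Finset.mem_univ i, hlt⟩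
  exact absurd hs (ne_of_lt this)

theorem stmt_3 {n : ℕ} (lam mu : Fin n → ℝ)
    (hlam0 : ∀ i, 0 ≤ lam i) (hlam1 : ∑ i, lam i = 1)
    (hmu0 : ∀ j, 0 ≤ mu j) (hmu1 : ∑ j, mu j = 1)
    (hlamdec : Antitone lam) (hmudec : Antitone mu)
    (b : Fin n → Fin n → ℝ)
    (hb0 : ∀ i j, 0 ≤ b i j) (hbrow : ∀ i, ∑ j, b i j = 1) (hbcol : ∀ j, ∑ i, b i j = 1)
    (hlb : ∀ j, ∑ i, lam i * b i j = mu j)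
    (hent : ∑ j, eta (mu j) = ∑ i, eta (lam i)) :
    ∀ i, ∑ j, mu j * b i j = lam i := by
  set f : ℝ → ℝ := fun x => x * Real.log x with hf
  have hconv := Real.strictConvexOn_mul_log
  -- μ_j as a convex combination
  have hcomb : ∀ j, (∑ i, b i j • lam i) = mu j := by
    intro j
    rw [← hlb j]
    simp [smul_eq_mul, mul_comm]
  -- termwise Jensen
  have hjen : ∀ j, f (mu j) ≤ ∑ i, b i j • f (lam i) := by
    intro j
    rw [← hcomb j]
    exact hconv.convexOn.map_sum_le (fun i _ => hb0 i j) (hbcol j) (fun i _ => hlam0 i)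
  -- sums are equal
  have hsum : ∑ j, f (mu j) = ∑ j, ∑ i, b i j • f (lam i) := by
    have h1 : ∑ j, ∑ i, b i j • f (lam i) = ∑ i, f (lam i) := by
      rw [Finset.sum_comm]
      simp_rw [smul_eq_mul, ← Finset.sum_mul, hbrow, one_mul]
    have h2 : ∑ j, f (mu j) = ∑ i, f (lam i) := by
      have := hent
      simp only [eta, Finset.sum_neg_distrib, neg_inj] at this
      exact this
    rw [h2, h1]
  -- termwise equality
  have heq : ∀ j, f (mu j) = ∑ i, b i j • f (lam i) :=
    sum_eq_of_le_of_sum_eq hjen hsum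
  -- equality case of Jensen
  have hkey : ∀ j i, b i j ≠ 0 → lam i = mu j := by
    intro j i hbij
    have := (hconv.map_sum_eq_iff' (t := Finset.univ) (w := fun i => b i j) (p := lam)
      (fun i _ => hb0 i j) (hbcol j) (fun i _ => hlam0 i)).mp
    rw [hcomb j] at this
    exact this (heq j) i (Finset.mem_univ i) hbij
  intro i
  have : ∀ j, mu j * b i j = lam i * b i j := by
    intro j
    rcases eq_or_ne (b i j) 0 with h | h
    · simp [h]
    · rw [hkey j i h]
  rw [Finset.sum_congr rfl (fun j _ => this j), ← Finset.mul_sum, hbrow, mul_one]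
end

section
/- Let Φ be a positive unital trace-preserving linear map on M_n(ℂ), Φ* its adjoint with respect to the Hilbert–Schmidt inner product ⟨x,y⟩ = Tr(y*x), and D a density matrix. If Φ(D) = u D u* for some unitary u, then Φ*(Φ(D)) = D. -/
open Matrix BigOperators ComplexOrder

namespace Stmt6Aux
variable {n : ℕ}

lemma trace_ext {A B : Matrix (Fin n) (Fin n) ℂ}
    (h : ∀ y : Matrix (Fin n) (Fin n) ℂ, (y * A).trace = (y * B).trace) : A = B := by
  ext i j
  have := h (Matrix.single j i 1)
  simpa [Matrix.trace, Matrix.diag, Matrix.mul_apply, Matrix.single, ite_and,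
    Finset.sum_ite_eq] using this

lemma trace_nonneg_of_posSemidef {A : Matrix (Fin n) (Fin n) ℂ} (hA : A.PosSemidef) :
    0 ≤ A.trace := by
  obtain ⟨B, rfl⟩ := (by open scoped MatrixOrder in exact CStarAlgebra.nonneg_iff_eq_star_mul_self.mp hA.nonneg :
    ∃ B : Matrix (Fin n) (Fin n) ℂ, A = Bᴴ * B)
  refine Finset.sum_nonneg fun i _ => ?_
  rw [Matrix.diag, Matrix.mul_apply]
  exact Finset.sum_nonneg fun j _ => by
    simpa [Matrix.conjTranspose_apply] using star_mul_self_nonneg (B j i)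

lemma trace_mul_nonneg {A B : Matrix (Fin n) (Fin n) ℂ} (hA : A.PosSemidef)
    (hB : B.PosSemidef) : 0 ≤ (A * B).trace := by
  obtain ⟨P, rfl⟩ := (by open scoped MatrixOrder in exact CStarAlgebra.nonneg_iff_eq_star_mul_self.mp hA.nonneg :
    ∃ B : Matrix (Fin n) (Fin n) ℂ, A = Bᴴ * B)
  obtain ⟨Q, rfl⟩ := (by open scoped MatrixOrder in exact CStarAlgebra.nonneg_iff_eq_star_mul_self.mp hB.nonneg :
    ∃ B' : Matrix (Fin n) (Fin n) ℂ, B = B'ᴴ * B')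
  have h1 : (Pᴴ * P * (Qᴴ * Q)).trace = ((P * Qᴴ)ᴴ * (P * Qᴴ)).trace := by
    rw [conjTranspose_mul, conjTranspose_conjTranspose, ← Matrix.mul_assoc,
      Matrix.trace_mul_cycle]
    simp only [Matrix.mul_assoc]
  rw [h1]
  exact trace_nonneg_of_posSemidef (posSemidef_conjTranspose_mul_self _)

lemma dot_eq_trace (M : Matrix (Fin n) (Fin n) ℂ) (v : Fin n → ℂ) :
    star v ⬝ᵥ (M *ᵥ v) = (M * vecMulVec v (star v)).trace := by
  simp only [Matrix.trace, Matrix.diag, Matrix.mul_apply, Matrix.vecMulVec_apply,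
    dotProduct, Matrix.mulVec, Pi.star_apply, Finset.mul_sum]
  exact Finset.sum_congr rfl fun i _ => Finset.sum_congr rfl fun j _ => by ring

lemma vecMulVec_posSemidef (v : Fin n → ℂ) : (vecMulVec v (star v)).PosSemidef := by
  rw [vecMulVec_eq (Fin 1)]
  have := posSemidef_self_mul_conjTranspose (replicateCol (Fin 1) v)
  rwa [conjTranspose_replicateCol] at this

lemma eq_zero_of_trace_conjTranspose_mul_self {T : Matrix (Fin n) (Fin n) ℂ}
    (h : (Tᴴ * T).trace = 0) : T = 0 := by
  have hsum : ∑ k : Fin n, ∑ m : Fin n, star (T m k) * (T m k) = 0 := by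
    simpa [Matrix.trace, Matrix.diag, Matrix.mul_apply, Matrix.conjTranspose_apply] using h
  have h1 := (Finset.sum_eq_zero_iff_of_nonneg (fun k _ =>
    Finset.sum_nonneg fun m _ => star_mul_self_nonneg (T m k))).mp hsum
  ext m k
  have h2 := (Finset.sum_eq_zero_iff_of_nonneg (fun m _ =>
    star_mul_self_nonneg (T m k))).mp (h1 k (Finset.mem_univ k)) m (Finset.mem_univ m)
  have h3 : Complex.normSq (T m k) = 0 := by
    rw [Complex.star_def, mul_comm, Complex.mul_conj] at h2
    exact_mod_cast h2
  simpa using Complex.normSq_eq_zero.mp h3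

lemma sum_stdBasis_diag : (∑ i : Fin n, Matrix.single i i (1:ℂ)) = 1 := by
  ext a b
  rw [Matrix.sum_apply]
  by_cases hab : a = b
  · subst hab
    simp [Matrix.single, Matrix.one_apply, Finset.sum_ite_eq]
  · rw [Matrix.one_apply_ne hab]
    refine Finset.sum_eq_zero fun x _ => ?_
    simp only [Matrix.single, Matrix.of_apply, ite_eq_right_iff, and_imp]
    rintro rfl rfl
    exact absurd rfl hab

lemma diagonal_eq_sum (d : Fin n → ℂ) :
    diagonal d = ∑ i, d i • Matrix.single i i (1:ℂ) := by
  ext a b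
  rw [Matrix.sum_apply]
  by_cases hab : a = b
  · subst hab
    simp [Matrix.single, Matrix.diagonal_apply, Matrix.smul_apply, ite_and,
      Finset.sum_ite_eq]
  · rw [Matrix.diagonal_apply_ne _ hab]
    refine (Finset.sum_eq_zero fun x _ => ?_).symm
    simp only [Matrix.smul_apply, Matrix.single, Matrix.of_apply, smul_eq_mul]
    rw [if_neg, mul_zero]
    rintro ⟨rfl, rfl⟩
    exact absurd rfl hab

lemma stdBasis_eq_diagonal (i : Fin n) :
    Matrix.single i i (1:ℂ) = diagonal (Pi.single i 1) := by
  ext a b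
  by_cases hab : a = b
  · subst hab
    by_cases hia : i = a <;>
      simp [Matrix.single, Matrix.diagonal_apply, Pi.single_apply, hia, eq_comm]
  · rw [Matrix.diagonal_apply_ne _ hab]
    simp only [Matrix.single, Matrix.of_apply, ite_eq_right_iff, and_imp]
    rintro rfl rfl
    exact absurd rfl hab

lemma exists_spectral {a : Matrix (Fin n) (Fin n) ℂ} (ha : a.IsHermitian) :
    ∃ p : Fin n → Matrix (Fin n) (Fin n) ℂ,
      (∀ i, (p i).PosSemidef) ∧ (∀ i j, p i * p j = if i = j then p i else 0) ∧
      (∑ i, p i = 1) ∧ (a = ∑ i, (ha.eigenvalues i : ℂ) • p i) := by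
  classical
  set U : Matrix (Fin n) (Fin n) ℂ := (ha.eigenvectorUnitary : Matrix (Fin n) (Fin n) ℂ) with hUdef
  have hU1 : U * Uᴴ = 1 := by
    rw [← Matrix.star_eq_conjTranspose]
    exact (Matrix.mem_unitaryGroup_iff).mp ha.eigenvectorUnitary.2
  have hU2 : Uᴴ * U = 1 := by
    rw [← Matrix.star_eq_conjTranspose]
    exact (Matrix.mem_unitaryGroup_iff').mp ha.eigenvectorUnitary.2
  refine ⟨fun i => U * Matrix.single i i 1 * Uᴴ, fun i => ?_, fun i j => ?_, ?_, ?_⟩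
  · dsimp only
    rw [stdBasis_eq_diagonal]
    refine (Matrix.PosSemidef.diagonal ?_).mul_mul_conjTranspose_same U
    intro j
    by_cases hj : j = i <;> simp [Pi.single_apply, hj]
  · dsimp only
    have hmid : (U * Matrix.single i i 1 * Uᴴ) * (U * Matrix.single j j 1 * Uᴴ)
        = U * (Matrix.single i i 1 * Matrix.single j j 1) * Uᴴ := by
      simp only [← Matrix.mul_assoc]
      rw [Matrix.mul_assoc (U * Matrix.single i i 1) Uᴴ U, hU2, Matrix.mul_one,
        Matrix.mul_assoc U (Matrix.single i i 1) (Matrix.single j j 1)]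
    rw [hmid]
    by_cases hij : i = j
    · subst hij
      simp [Matrix.single_mul_single_same]
    · simp [Matrix.single_mul_single_of_ne (h := hij), hij]
  · dsimp only
    rw [← Finset.sum_mul, ← Finset.mul_sum, sum_stdBasis_diag, Matrix.mul_one, hU1]
  · conv_lhs => rw [ha.spectral_theorem, Unitary.conjStarAlgAut_apply]
    rw [← hUdef, Matrix.star_eq_conjTranspose, show (RCLike.ofReal ∘ ha.eigenvalues : Fin n → ℂ)
        = fun i => (ha.eigenvalues i : ℂ) from rfl, diagonal_eq_sum]
    rw [Finset.mul_sum, Finset.sum_mul]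
    exact Finset.sum_congr rfl fun i _ => by
      rw [Matrix.mul_smul, Matrix.smul_mul]

end Stmt6Aux

theorem stmt_6 {n : ℕ} (Φ Ψ : Matrix (Fin n) (Fin n) ℂ →ₗ[ℂ] Matrix (Fin n) (Fin n) ℂ)
    (hΦ : IsPUTP Φ)
    (hadj : ∀ x y : Matrix (Fin n) (Fin n) ℂ, (y * Ψ x).trace = (Φ y * x).trace)
    (D : Matrix (Fin n) (Fin n) ℂ) (hD : D.PosSemidef) (htr : D.trace = 1)
    (u : Matrix (Fin n) (Fin n) ℂ) (hu1 : u * star u = 1) (hu2 : star u * u = 1)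
    (hΦD : Φ D = u * D * star u) :
    Ψ (Φ D) = D := by
  classical
  obtain ⟨hpos, hunit, htrp⟩ := hΦ
  -- Ψ is unital
  have hΨ1 : Ψ (1 : Matrix (Fin n) (Fin n) ℂ) = 1 := by
    refine Stmt6Aux.trace_ext fun y => ?_
    rw [hadj, Matrix.mul_one, Matrix.mul_one, htrp]
  -- Φ preserves Hermitian matrices
  have hΦherm : ∀ x : Matrix (Fin n) (Fin n) ℂ, x.IsHermitian → (Φ x).IsHermitian := by
    intro x hx
    obtain ⟨p, hp_psd, -, -, hdec⟩ := Stmt6Aux.exists_spectral hx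
    rw [hdec, map_sum]
    show (∑ i, Φ ((hx.eigenvalues i : ℂ) • p i))ᴴ = ∑ i, Φ ((hx.eigenvalues i : ℂ) • p i)
    rw [Matrix.conjTranspose_sum]
    refine Finset.sum_congr rfl fun i _ => ?_
    rw [_root_.map_smul, Matrix.conjTranspose_smul, (hpos _ (hp_psd i)).1.eq]
    congr 1
    simp [Complex.star_def, Complex.conj_ofReal]
  -- Φ is star-preserving
  have hΦstar : ∀ y : Matrix (Fin n) (Fin n) ℂ, Φ yᴴ = (Φ y)ᴴ := by
    intro y
    have h1 : (y + yᴴ).IsHermitian := by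
      show (y + yᴴ)ᴴ = y + yᴴ
      rw [Matrix.conjTranspose_add, Matrix.conjTranspose_conjTranspose, add_comm]
    have h2 : (Complex.I • (y - yᴴ)).IsHermitian := by
      show (Complex.I • (y - yᴴ))ᴴ = _
      rw [Matrix.conjTranspose_smul, Matrix.conjTranspose_sub,
        Matrix.conjTranspose_conjTranspose, Complex.star_def, Complex.conj_I, neg_smul,
        ← smul_neg, neg_sub]
    have hΦ1 := hΦherm _ h1
    have hΦ2 := hΦherm _ h2
    have hy : (2⁻¹:ℂ) • (y + yᴴ) + (-Complex.I/2) • (Complex.I • (y - yᴴ)) = y := by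
      rw [smul_smul]
      have hc : (-Complex.I/2) * Complex.I = 2⁻¹ := by
        rw [div_mul_eq_mul_div, neg_mul, Complex.I_mul_I, neg_neg, one_div]
      rw [hc]
      module
    have hyH : (2⁻¹:ℂ) • (y + yᴴ) + (Complex.I/2) • (Complex.I • (y - yᴴ)) = yᴴ := by
      rw [smul_smul]
      have hc : (Complex.I/2) * Complex.I = -2⁻¹ := by
        rw [div_mul_eq_mul_div, Complex.I_mul_I]
        norm_num
      rw [hc]
      module
    have e1 : Φ y = (2⁻¹:ℂ) • Φ (y + yᴴ) + (-Complex.I/2) • Φ (Complex.I • (y - yᴴ)) := by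
      conv_lhs => rw [← hy]
      simp only [map_add, _root_.map_smul]
    have e2 : Φ yᴴ = (2⁻¹:ℂ) • Φ (y + yᴴ) + (Complex.I/2) • Φ (Complex.I • (y - yᴴ)) := by
      conv_lhs => rw [← hyH]
      simp only [map_add, _root_.map_smul]
    rw [e2]
    conv_rhs => rw [e1]
    rw [Matrix.conjTranspose_add, Matrix.conjTranspose_smul, Matrix.conjTranspose_smul,
      hΦ1.eq, hΦ2.eq]
    congr 1
    · congr 1
      simp [Complex.star_def]
    · congr 1
      simp [Complex.star_def, Complex.conj_I]
  -- Ψ preserves Hermitian matrices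
  have hΨherm : ∀ x : Matrix (Fin n) (Fin n) ℂ, x.IsHermitian → (Ψ x).IsHermitian := by
    intro x hx
    show (Ψ x)ᴴ = Ψ x
    refine Stmt6Aux.trace_ext fun y => ?_
    calc (y * (Ψ x)ᴴ).trace
        = ((Ψ x * yᴴ)ᴴ).trace := by
          rw [Matrix.conjTranspose_mul, Matrix.conjTranspose_conjTranspose]
      _ = star ((Ψ x * yᴴ).trace) := Matrix.trace_conjTranspose _
      _ = star ((yᴴ * Ψ x).trace) := by rw [Matrix.trace_mul_comm]
      _ = star ((Φ yᴴ * x).trace) := by rw [hadj]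
      _ = star (((Φ y)ᴴ * x).trace) := by rw [hΦstar]
      _ = (((Φ y)ᴴ * x)ᴴ).trace := (Matrix.trace_conjTranspose _).symm
      _ = (xᴴ * Φ y).trace := by
          rw [Matrix.conjTranspose_mul, Matrix.conjTranspose_conjTranspose]
      _ = (x * Φ y).trace := by rw [hx.eq]
      _ = (Φ y * x).trace := Matrix.trace_mul_comm _ _
      _ = (y * Ψ x).trace := (hadj x y).symm
  -- Ψ is positive
  have hΨpos : ∀ x : Matrix (Fin n) (Fin n) ℂ, x.PosSemidef → (Ψ x).PosSemidef := by
    intro x hx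
    refine posSemidef_iff_dotProduct_mulVec.mpr ⟨hΨherm x hx.1, fun v => ?_⟩
    rw [Stmt6Aux.dot_eq_trace, Matrix.trace_mul_comm, hadj]
    exact Stmt6Aux.trace_mul_nonneg (hpos _ (Stmt6Aux.vecMulVec_posSemidef v)) hx
  -- the spectral decomposition of a := Φ D
  set a := Φ D with hadef
  have ha_psd : a.PosSemidef := hpos D hD
  have ha : a.IsHermitian := ha_psd.1
  obtain ⟨p, hp_psd, hp_mul, hp_sum, hdec⟩ := Stmt6Aux.exists_spectral ha
  set c : Fin n → ℝ := ha.eigenvalues with hcdef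
  set q : Fin n → Matrix (Fin n) (Fin n) ℂ := fun i => Ψ (p i) with hqdef
  have hq_psd : ∀ i, (q i).PosSemidef := fun i => hΨpos _ (hp_psd i)
  have hq_sum : ∑ i, q i = 1 := by
    rw [hqdef, ← map_sum, hp_sum, hΨ1]
  have hE : Ψ a = ∑ i, (c i : ℂ) • q i := by
    rw [hdec, map_sum]
    exact Finset.sum_congr rfl fun i _ => _root_.map_smul Ψ _ _
  have ha2 : a * a = ∑ i, ((c i : ℂ) * c i) • p i := by
    rw [hdec, Finset.sum_mul_sum]
    calc ∑ i, ∑ j, ((c i : ℂ) • p i) * ((c j : ℂ) • p j)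
        = ∑ i, ∑ j, if i = j then ((c i : ℂ) * c j) • p i else 0 := by
          refine Finset.sum_congr rfl fun i _ => Finset.sum_congr rfl fun j _ => ?_
          rw [smul_mul_smul_comm, hp_mul]
          by_cases hij : i = j <;> simp [hij]
      _ = ∑ i, ((c i : ℂ) * c i) • p i := by
          refine Finset.sum_congr rfl fun i _ => ?_
          rw [Finset.sum_ite_eq, if_pos (Finset.mem_univ i)]
  have hΨa2 : Ψ (a * a) = ∑ i, ((c i : ℂ) * c i) • q i := by
    rw [ha2, map_sum]
    exact Finset.sum_congr rfl fun i _ => _root_.map_smul Ψ _ _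
  set t : Fin n → Fin n → ℂ := fun i j => (q i * q j).trace with htdef
  have ht0 : ∀ i j, 0 ≤ t i j := fun i j =>
    Stmt6Aux.trace_mul_nonneg (hq_psd i) (hq_psd j)
  have htsymm : ∀ i j, t i j = t j i := fun i j => Matrix.trace_mul_comm _ _
  have htraceq : ∀ i, (q i).trace = ∑ j, t i j := by
    intro i
    conv_lhs => rw [← Matrix.mul_one (q i), ← hq_sum]
    rw [Finset.mul_sum, Matrix.trace_sum]
  have htr_a2 : (a * a).trace = ∑ i, ∑ j, ((c i : ℂ) * c i) * t i j := by
    have h0 := hadj (a * a) 1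
    rw [Matrix.one_mul, hunit, Matrix.one_mul] at h0
    rw [← h0, hΨa2, Matrix.trace_sum]
    refine Finset.sum_congr rfl fun i _ => ?_
    rw [Matrix.trace_smul, htraceq, smul_eq_mul, Finset.mul_sum]
  have htrEE : (Ψ a * Ψ a).trace = ∑ i, ∑ j, ((c i : ℂ) * c j) * t i j := by
    rw [hE, Finset.sum_mul_sum, Matrix.trace_sum]
    refine Finset.sum_congr rfl fun i _ => ?_
    rw [Matrix.trace_sum]
    refine Finset.sum_congr rfl fun j _ => ?_
    rw [smul_mul_smul_comm, Matrix.trace_smul, smul_eq_mul]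
  -- the key Schwarz-type inequality
  have hineq : (Ψ a * Ψ a).trace ≤ (a * a).trace := by
    rw [htrEE, htr_a2]
    have hswap2 : (∑ i, ∑ j, (2⁻¹:ℂ) * (((c j : ℂ) * c j) * t i j))
        = ∑ i, ∑ j, (2⁻¹:ℂ) * (((c i : ℂ) * c i) * t i j) := by
      rw [Finset.sum_comm]
      exact Finset.sum_congr rfl fun i _ => Finset.sum_congr rfl fun j _ => by rw [htsymm]
    calc ∑ i, ∑ j, ((c i : ℂ) * c j) * t i j
        ≤ ∑ i, ∑ j, (2⁻¹:ℂ) * (((c i : ℂ) * c i + (c j : ℂ) * c j) * t i j) := by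
          refine Finset.sum_le_sum fun i _ => Finset.sum_le_sum fun j _ => ?_
          have hr : (c i * c j : ℝ) ≤ 2⁻¹ * (c i * c i + c j * c j) := by
            nlinarith [sq_nonneg (c i - c j)]
          have hc2 : ((c i : ℂ) * c j) ≤ ((2⁻¹ * (c i * c i + c j * c j) : ℝ) : ℂ) := by
            rw [show ((c i : ℂ) * c j) = ((c i * c j : ℝ) : ℂ) by push_cast; ring]
            exact_mod_cast hr
          calc ((c i : ℂ) * c j) * t i j
              ≤ ((2⁻¹ * (c i * c i + c j * c j) : ℝ) : ℂ) * t i j :=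
                mul_le_mul_of_nonneg_right hc2 (ht0 i j)
            _ = (2⁻¹:ℂ) * (((c i : ℂ) * c i + (c j : ℂ) * c j) * t i j) := by
                push_cast; ring
      _ = ∑ i, ∑ j, ((2⁻¹:ℂ) * (((c i : ℂ) * c i) * t i j)
            + (2⁻¹:ℂ) * (((c j : ℂ) * c j) * t i j)) :=
          Finset.sum_congr rfl fun i _ => Finset.sum_congr rfl fun j _ => by ring
      _ = ∑ i, ∑ j, ((c i : ℂ) * c i) * t i j := by
          simp only [Finset.sum_add_distrib]
          rw [hswap2, ← Finset.sum_add_distrib]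
          refine Finset.sum_congr rfl fun i _ => ?_
          rw [← Finset.sum_add_distrib]
          exact Finset.sum_congr rfl fun j _ => by ring
  -- trace identities using the unitary conjugation
  have haa : (a * a).trace = (D * D).trace := by
    rw [hΦD]
    have hre : (u * D * star u) * (u * D * star u) = u * (D * D) * star u := by
      calc (u * D * star u) * (u * D * star u)
          = u * D * (star u * u) * D * star u := by simp only [Matrix.mul_assoc]
        _ = u * (D * D) * star u := by
            rw [hu2, Matrix.mul_one, Matrix.mul_assoc u D D]
    rw [hre, Matrix.trace_mul_cycle, hu2, Matrix.one_mul]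
  have hDE : (D * Ψ a).trace = (a * a).trace := by
    rw [hadj, ← hadef]
  -- conclude
  have hEH : (Ψ a)ᴴ = Ψ a := (hΨherm a ha).eq
  set T := Ψ a - D with hT
  have hTH : Tᴴ = T := by
    rw [hT, Matrix.conjTranspose_sub, hEH, hD.1.eq]
  have htrT : (Tᴴ * T).trace = (Ψ a * Ψ a).trace - (a * a).trace := by
    rw [hTH, hT, Matrix.sub_mul, Matrix.mul_sub, Matrix.mul_sub, Matrix.trace_sub,
      Matrix.trace_sub, Matrix.trace_sub]
    have h1 : (Ψ a * D).trace = (a * a).trace := by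
      rw [Matrix.trace_mul_comm]; exact hDE
    have h2 : (D * D).trace = (a * a).trace := haa.symm
    rw [h1, hDE, h2]
    ring
  have hle : (Tᴴ * T).trace ≤ 0 := by
    rw [htrT]
    exact sub_nonpos.mpr hineq
  have hge : (0:ℂ) ≤ (Tᴴ * T).trace :=
    Stmt6Aux.trace_nonneg_of_posSemidef (posSemidef_conjTranspose_mul_self T)
  have hT0 : T = 0 := Stmt6Aux.eq_zero_of_trace_conjTranspose_mul_self (le_antisymm hle hge)
  have hfin : Ψ a - D = 0 := by rw [← hT]; exact hT0
  exact sub_eq_zero.mp hfin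
end

section
/- Let Φ be a positive unital trace-preserving linear map on M_n(ℂ) with Hilbert–Schmidt adjoint Φ*, and D a density matrix with Φ*(Φ(D)) = D. Then S(Φ(D)) = S(D), where S denotes von Neumann entropy. -/
open Matrix BigOperators ComplexOrder

variable {n : ℕ}

lemma trace_psd_nonneg {A : Matrix (Fin n) (Fin n) ℂ} (hA : A.PosSemidef) :
    0 ≤ A.trace := by
  unfold Matrix.trace
  apply Finset.sum_nonneg
  intro i _
  have := hA.dotProduct_mulVec_nonneg (Pi.single i 1)
  simpa [dotProduct, Matrix.mulVec, Pi.single_apply, Finset.sum_ite_eq,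
    Matrix.diag] using this

lemma trace_mul_psd_nonneg {A B : Matrix (Fin n) (Fin n) ℂ} (hA : A.PosSemidef)
    (hB : B.PosSemidef) : 0 ≤ (A * B).trace := by
  obtain ⟨C, rfl⟩ : ∃ C : Matrix (Fin n) (Fin n) ℂ, B = Cᴴ * C := by
    open scoped MatrixOrder in exact CStarAlgebra.nonneg_iff_eq_star_mul_self.mp hB.nonneg
  have h1 : (A * (Cᴴ * C)).trace = (C * A * Cᴴ).trace := by
    rw [← Matrix.mul_assoc, Matrix.trace_mul_cycle A Cᴴ C]
  rw [h1]
  exact trace_psd_nonneg (hA.mul_mul_conjTranspose_same C)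

lemma eq_zero_of_forall_trace {A : Matrix (Fin n) (Fin n) ℂ}
    (h : ∀ y, (y * A).trace = 0) : A = 0 := by
  have h2 := h Aᴴ
  have h3 : (Aᴴ * A).trace = ((∑ i, ∑ j, Complex.normSq (A i j) : ℝ) : ℂ) := by
    unfold Matrix.trace
    push_cast
    simp only [Matrix.diag, Matrix.mul_apply, Matrix.conjTranspose_apply]
    rw [Finset.sum_comm]
    congr 1; ext i; congr 1; ext j
    rw [Complex.star_def, ← Complex.normSq_eq_conj_mul_self]
  rw [h3] at h2
  have h4 : (∑ i, ∑ j, Complex.normSq (A i j) : ℝ) = 0 := by exact_mod_cast h2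
  ext i j
  have h5 : ∀ i ∈ Finset.univ, (0:ℝ) ≤ ∑ j, Complex.normSq (A i j) :=
    fun i _ => Finset.sum_nonneg fun j _ => Complex.normSq_nonneg _
  have := (Finset.sum_eq_zero_iff_of_nonneg h5).mp h4 i (Finset.mem_univ i)
  have := (Finset.sum_eq_zero_iff_of_nonneg (fun j _ => Complex.normSq_nonneg (A i j))).mp
    this j (Finset.mem_univ j)
  simpa using Complex.normSq_eq_zero.mp this

section spectral
variable {A : Matrix (Fin n) (Fin n) ℂ}

/-- Eigenvector unitary as a plain matrix. -/
noncomputable def sU (hA : A.IsHermitian) : Matrix (Fin n) (Fin n) ℂ :=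
  (Matrix.IsHermitian.eigenvectorUnitary hA : Matrix (Fin n) (Fin n) ℂ)

/-- Spectral projection onto the i-th eigenvector. -/
noncomputable def proj (hA : A.IsHermitian) (i : Fin n) : Matrix (Fin n) (Fin n) ℂ :=
  sU hA * Matrix.diagonal (Pi.single i 1) * (sU hA)ᴴ

lemma sU_mul_star (hA : A.IsHermitian) : sU hA * (sU hA)ᴴ = 1 := by
  rw [← Matrix.star_eq_conjTranspose]
  exact (Matrix.mem_unitaryGroup_iff).mp (Matrix.IsHermitian.eigenvectorUnitary hA).2

lemma star_mul_sU (hA : A.IsHermitian) : (sU hA)ᴴ * sU hA = 1 := by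
  rw [← Matrix.star_eq_conjTranspose]
  exact (Matrix.mem_unitaryGroup_iff').mp (Matrix.IsHermitian.eigenvectorUnitary hA).2

lemma Qherm (i : Fin n) :
    (Matrix.diagonal (Pi.single i 1 : Fin n → ℂ))ᴴ = Matrix.diagonal (Pi.single i 1) := by
  have h : (star (Pi.single i 1 : Fin n → ℂ)) = Pi.single i 1 := by
    ext j
    simp [Pi.single_apply, apply_ite]
  rw [Matrix.diagonal_conjTranspose, h]

lemma Qidem (i : Fin n) :
    Matrix.diagonal (Pi.single i 1 : Fin n → ℂ) * Matrix.diagonal (Pi.single i 1) =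
      Matrix.diagonal (Pi.single i 1) := by
  ext j k
  by_cases hjk : j = k <;> by_cases hji : j = i <;>
    simp [Matrix.diagonal_apply, Matrix.mul_apply, Pi.single_apply, hjk, hji,
      Finset.sum_ite_eq]
  all_goals intro h
  all_goals simp_all [eq_comm]

lemma proj_posSemidef (hA : A.IsHermitian) (i : Fin n) : (proj hA i).PosSemidef := by
  have key : proj hA i = (sU hA * Matrix.diagonal (Pi.single i 1)) *
      (sU hA * Matrix.diagonal (Pi.single i 1))ᴴ := by
    rw [Matrix.conjTranspose_mul, Qherm, proj]
    rw [Matrix.mul_assoc, Matrix.mul_assoc, ← Matrix.mul_assoc (Matrix.diagonal _), Qidem]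
  rw [key]
  exact Matrix.posSemidef_self_mul_conjTranspose _

lemma trace_proj (hA : A.IsHermitian) (i : Fin n) : (proj hA i).trace = 1 := by
  rw [proj, Matrix.trace_mul_cycle (sU hA), star_mul_sU hA, Matrix.one_mul]
  simp [Matrix.trace_diagonal, Pi.single_apply]

lemma diagonal_eq_sum (d : Fin n → ℂ) :
    Matrix.diagonal d = ∑ i, d i • Matrix.diagonal (Pi.single i 1 : Fin n → ℂ) := by
  ext j k
  by_cases h : j = k <;>
    simp [h, Matrix.sum_apply, Matrix.diagonal_apply, Pi.single_apply, Finset.sum_ite_eq]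

lemma sum_proj (hA : A.IsHermitian) : ∑ i, proj hA i = 1 := by
  have h1 : (∑ i, Matrix.diagonal (Pi.single i 1 : Fin n → ℂ)) = 1 := by
    have := diagonal_eq_sum (fun _ => (1:ℂ) : Fin n → ℂ)
    simp only [one_smul] at this
    rw [← this]
    exact Matrix.diagonal_one
  have h2 : ∑ i, proj hA i =
      sU hA * (∑ i, Matrix.diagonal (Pi.single i 1 : Fin n → ℂ)) * (sU hA)ᴴ := by
    simp only [proj, Finset.mul_sum, Finset.sum_mul]
  rw [h2, h1, Matrix.mul_one, sU_mul_star]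

lemma spectral_sum (hA : A.IsHermitian) :
    A = ∑ i, (hA.eigenvalues i : ℂ) • proj hA i := by
  conv_lhs => rw [hA.spectral_theorem]
  rw [Unitary.conjStarAlgAut_apply, Matrix.star_eq_conjTranspose]
  show sU hA * Matrix.diagonal (RCLike.ofReal ∘ hA.eigenvalues) * (sU hA)ᴴ = _
  rw [diagonal_eq_sum (RCLike.ofReal ∘ hA.eigenvalues), Finset.mul_sum, Finset.sum_mul]
  refine Finset.sum_congr rfl fun i _ => ?_
  rw [Matrix.mul_smul, Matrix.smul_mul, proj]
  rfl

lemma trace_proj_mul (hA : A.IsHermitian) (i : Fin n) :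
    (proj hA i * A).trace = (hA.eigenvalues i : ℂ) := by
  have hAeq : A = sU hA * Matrix.diagonal (RCLike.ofReal ∘ hA.eigenvalues) * (sU hA)ᴴ := by
    conv_lhs => rw [hA.spectral_theorem]
    rw [Unitary.conjStarAlgAut_apply, Matrix.star_eq_conjTranspose]
    rfl
  have hstep : (proj hA i *
      (sU hA * Matrix.diagonal (RCLike.ofReal ∘ hA.eigenvalues) * (sU hA)ᴴ)) =
      sU hA * (Matrix.diagonal (Pi.single i 1) *
        Matrix.diagonal (RCLike.ofReal ∘ hA.eigenvalues : Fin n → ℂ)) * (sU hA)ᴴ := by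
    rw [proj]
    calc sU hA * Matrix.diagonal (Pi.single i 1) * (sU hA)ᴴ *
          (sU hA * Matrix.diagonal (RCLike.ofReal ∘ hA.eigenvalues) * (sU hA)ᴴ)
        = sU hA * Matrix.diagonal (Pi.single i 1) * ((sU hA)ᴴ * sU hA) *
          (Matrix.diagonal (RCLike.ofReal ∘ hA.eigenvalues) * (sU hA)ᴴ) := by
          simp only [Matrix.mul_assoc]
      _ = _ := by rw [star_mul_sU hA, Matrix.mul_one]; simp only [Matrix.mul_assoc]
  rw [← hAeq] at hstep
  rw [hstep, Matrix.trace_mul_cycle (sU hA), star_mul_sU hA, Matrix.one_mul,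
    Matrix.diagonal_mul_diagonal, Matrix.trace_diagonal]
  simp [Pi.single_apply]

end spectral

lemma eta_eq : eta = Real.negMulLog := by
  funext t
  simp [eta, Real.negMulLog, neg_mul]

lemma vnEntropy_le {Θ : Matrix (Fin n) (Fin n) ℂ →ₗ[ℂ] Matrix (Fin n) (Fin n) ℂ}
    (hΘ : IsPUTP Θ) {D : Matrix (Fin n) (Fin n) ℂ} (hD : D.PosSemidef) :
    vnEntropy D ≤ vnEntropy (Θ D) := by
  obtain ⟨hpos, huni, htrp⟩ := hΘ
  have hΘD : (Θ D).PosSemidef := hpos D hD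
  have hH : D.IsHermitian := hD.isHermitian
  have hH' : (Θ D).IsHermitian := hΘD.isHermitian
  set μ := hH.eigenvalues with hμdef
  set lam := hH'.eigenvalues with hlamdef
  set e := proj hH with hedef
  set f := proj hH' with hfdef
  have hcr : ∀ j i : Fin n, ∃ w : ℝ, 0 ≤ w ∧ (f j * Θ (e i)).trace = (w : ℂ) := by
    intro j i
    have h0 : 0 ≤ (f j * Θ (e i)).trace :=
      trace_mul_psd_nonneg (proj_posSemidef hH' j) (hpos _ (proj_posSemidef hH i))
    rw [Complex.nonneg_iff] at h0
    exact ⟨((f j * Θ (e i)).trace).re, h0.1, Complex.ext (by simp) (by simp [← h0.2])⟩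
  choose w hw0 hw using hcr
  have hrow : ∀ j, ∑ i, w j i = 1 := by
    intro j
    have h1 : ∑ i, (f j * Θ (e i)).trace = 1 := by
      calc ∑ i, (f j * Θ (e i)).trace = (f j * Θ (∑ i, e i)).trace := by
            rw [map_sum, Finset.mul_sum, Matrix.trace_sum]
        _ = 1 := by rw [hedef, sum_proj hH, huni, Matrix.mul_one, hfdef, trace_proj hH' j]
    simp only [hw] at h1
    exact_mod_cast h1
  have hcol : ∀ i, ∑ j, w j i = 1 := by
    intro i
    have h1 : ∑ j, (f j * Θ (e i)).trace = 1 := by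
      calc ∑ j, (f j * Θ (e i)).trace = ((∑ j, f j) * Θ (e i)).trace := by
            rw [← Matrix.trace_sum, Finset.sum_mul]
        _ = 1 := by
            rw [hfdef, sum_proj hH', Matrix.one_mul, htrp, hedef, trace_proj hH i]
    simp only [hw] at h1
    exact_mod_cast h1
  have heig : ∀ j, lam j = ∑ i, w j i * μ i := by
    intro j
    have h1 : (f j * Θ D).trace = (lam j : ℂ) := trace_proj_mul hH' j
    have h2 : (f j * Θ D).trace = ∑ i, (w j i * μ i : ℝ) := by
      conv_lhs => rw [spectral_sum hH]
      push_cast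
      rw [map_sum, Finset.mul_sum, Matrix.trace_sum]
      refine Finset.sum_congr rfl fun i _ => ?_
      rw [← hedef, _root_.map_smul, Matrix.mul_smul, Matrix.trace_smul, smul_eq_mul, hw,
        mul_comm]
    rw [h2] at h1
    exact_mod_cast h1.symm
  have hμ0 : ∀ i, 0 ≤ μ i := fun i => hD.eigenvalues_nonneg i
  have key : ∀ j, ∑ i, w j i * eta (μ i) ≤ eta (lam j) := by
    intro j
    have hj := Real.concaveOn_negMulLog.le_map_sum (t := Finset.univ) (w := w j) (p := μ)
      (fun i _ => hw0 j i) (hrow j) (fun i _ => hμ0 i)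
    rw [eta_eq]
    calc ∑ i, w j i * Real.negMulLog (μ i) = ∑ i, w j i • Real.negMulLog (μ i) := by
          simp [smul_eq_mul]
      _ ≤ Real.negMulLog (∑ i, w j i • μ i) := hj
      _ = Real.negMulLog (lam j) := by rw [heig j]; simp [smul_eq_mul]
  have hentD : vnEntropy D = ∑ i, eta (μ i) := by
    rw [vnEntropy, dif_pos hH]
  have hentΘD : vnEntropy (Θ D) = ∑ j, eta (lam j) := by
    rw [vnEntropy, dif_pos hH']
  rw [hentD, hentΘD]
  calc ∑ i, eta (μ i) = ∑ i, (∑ j, w j i) * eta (μ i) := by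
        refine Finset.sum_congr rfl fun i _ => ?_
        rw [hcol i, one_mul]
    _ = ∑ j, ∑ i, w j i * eta (μ i) := by
        rw [Finset.sum_comm]
        simp [Finset.sum_mul]
    _ ≤ ∑ j, eta (lam j) := Finset.sum_le_sum fun j _ => key j

lemma trace_left_cancel {A B : Matrix (Fin n) (Fin n) ℂ}
    (h : ∀ y, (y * A).trace = (y * B).trace) : A = B := by
  have h0 : ∀ y, (y * (A - B)).trace = 0 := by
    intro y
    rw [Matrix.mul_sub, Matrix.trace_sub, h y, sub_self]
  have := eq_zero_of_forall_trace h0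
  exact sub_eq_zero.mp this

lemma putp_isHermitian {Θ : Matrix (Fin n) (Fin n) ℂ →ₗ[ℂ] Matrix (Fin n) (Fin n) ℂ}
    (hΘ : IsPUTP Θ) {h : Matrix (Fin n) (Fin n) ℂ} (hh : h.IsHermitian) :
    (Θ h).IsHermitian := by
  have hrw : Θ h = ∑ i, (hh.eigenvalues i : ℂ) • Θ (proj hh i) := by
    conv_lhs => rw [spectral_sum hh]
    rw [map_sum]
    exact Finset.sum_congr rfl fun i _ => by rw [_root_.map_smul]
  rw [hrw]
  unfold Matrix.IsHermitian
  rw [Matrix.conjTranspose_sum]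
  refine Finset.sum_congr rfl fun i _ => ?_
  rw [Matrix.conjTranspose_smul]
  rw [(hΘ.1 _ (proj_posSemidef hh i)).isHermitian, Complex.star_def, Complex.conj_ofReal]

lemma putp_star {Θ : Matrix (Fin n) (Fin n) ℂ →ₗ[ℂ] Matrix (Fin n) (Fin n) ℂ}
    (hΘ : IsPUTP Θ) (y : Matrix (Fin n) (Fin n) ℂ) : Θ (yᴴ) = (Θ y)ᴴ := by
  have hherm : (((1:ℂ)/2) • (y + yᴴ)).IsHermitian := by
    unfold Matrix.IsHermitian
    rw [Matrix.conjTranspose_smul, Matrix.conjTranspose_add,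
      Matrix.conjTranspose_conjTranspose]
    rw [show star ((1:ℂ)/2) = (1:ℂ)/2 by simp]
    rw [add_comm]
  have hkerm : ((-(Complex.I)/2) • (y - yᴴ)).IsHermitian := by
    unfold Matrix.IsHermitian
    rw [Matrix.conjTranspose_smul, Matrix.conjTranspose_sub,
      Matrix.conjTranspose_conjTranspose]
    ext i j
    simp [Matrix.sub_apply, Matrix.smul_apply, smul_eq_mul, Complex.ext_iff]
    ring_nf
    simp
  have h1 := putp_isHermitian hΘ hherm
  have h2 := putp_isHermitian hΘ hkerm
  have hy : y = ((1:ℂ)/2) • (y + yᴴ) + Complex.I • ((-(Complex.I)/2) • (y - yᴴ)) := by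
    ext i j
    simp [Matrix.add_apply, Matrix.sub_apply, Matrix.smul_apply, Matrix.conjTranspose_apply,
      smul_eq_mul]
    ring_nf
    simp [Complex.I_sq]
    ring
  have hy' : yᴴ = ((1:ℂ)/2) • (y + yᴴ) - Complex.I • ((-(Complex.I)/2) • (y - yᴴ)) := by
    ext i j
    simp [Matrix.add_apply, Matrix.sub_apply, Matrix.smul_apply, Matrix.conjTranspose_apply,
      smul_eq_mul]
    ring_nf
    simp [Complex.I_sq]
    ring
  have e1 : Θ yᴴ = Θ (((1:ℂ)/2) • (y + yᴴ)) - Complex.I • Θ ((-(Complex.I)/2) • (y - yᴴ)) := by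
    rw [← _root_.map_smul Θ Complex.I, ← map_sub, ← hy']
  have e2 : Θ y = Θ (((1:ℂ)/2) • (y + yᴴ)) + Complex.I • Θ ((-(Complex.I)/2) • (y - yᴴ)) := by
    rw [← _root_.map_smul Θ Complex.I, ← map_add, ← hy]
  rw [e1, e2, Matrix.conjTranspose_add, Matrix.conjTranspose_smul, h1, h2,
    show star Complex.I = -Complex.I by simp, sub_eq_add_neg, neg_smul]

lemma vecMulVec_posSemidef (v : Fin n → ℂ) : (Matrix.vecMulVec v (star v)).PosSemidef := by
  refine Matrix.PosSemidef.of_dotProduct_mulVec_nonneg ?_ ?_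
  · ext i j
    simp [Matrix.conjTranspose_apply, Matrix.vecMulVec_apply, mul_comm]
  · intro u
    have hmv : ∀ i, (Matrix.vecMulVec v (star v) *ᵥ u) i = v i * (star v ⬝ᵥ u) := by
      intro i
      simp [Matrix.mulVec, Matrix.vecMulVec_apply, dotProduct, Finset.mul_sum, mul_assoc]
    have key : star u ⬝ᵥ (Matrix.vecMulVec v (star v) *ᵥ u) =
        star (star v ⬝ᵥ u) * (star v ⬝ᵥ u) := by
      have hz : star ((star v) ⬝ᵥ u) = ∑ i, star u i * v i := by
        simp [dotProduct, star_sum, mul_comm]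
      simp only [dotProduct] at hz hmv ⊢
      rw [hz, Finset.sum_mul]
      refine Finset.sum_congr rfl fun i _ => ?_
      rw [hmv i]
      ring
    rw [key]
    exact star_mul_self_nonneg _

lemma trace_vecMulVec_mul (v : Fin n → ℂ) (B : Matrix (Fin n) (Fin n) ℂ) :
    (Matrix.vecMulVec v (star v) * B).trace = star v ⬝ᵥ (B *ᵥ v) := by
  simp only [Matrix.trace, Matrix.diag, Matrix.mul_apply, Matrix.vecMulVec_apply,
    dotProduct, Matrix.mulVec, Pi.star_apply]
  rw [Finset.sum_comm]
  refine Finset.sum_congr rfl fun k _ => ?_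
  rw [Finset.mul_sum]
  refine Finset.sum_congr rfl fun i _ => ?_
  simp [dotProduct]
  ring

section adjoint
variable {Φ Ψ : Matrix (Fin n) (Fin n) ℂ →ₗ[ℂ] Matrix (Fin n) (Fin n) ℂ}

lemma adj_unital (hΦ : IsPUTP Φ)
    (hadj : ∀ x y : Matrix (Fin n) (Fin n) ℂ, (y * Ψ x).trace = (Φ y * x).trace) :
    Ψ 1 = 1 := by
  apply trace_left_cancel
  intro y
  rw [hadj, Matrix.mul_one, Matrix.mul_one, hΦ.2.2]

lemma adj_trace (hΦ : IsPUTP Φ)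
    (hadj : ∀ x y : Matrix (Fin n) (Fin n) ℂ, (y * Ψ x).trace = (Φ y * x).trace)
    (x : Matrix (Fin n) (Fin n) ℂ) : (Ψ x).trace = x.trace := by
  have := hadj x 1
  rwa [Matrix.one_mul, hΦ.2.1, Matrix.one_mul] at this

lemma adj_star (hΦ : IsPUTP Φ)
    (hadj : ∀ x y : Matrix (Fin n) (Fin n) ℂ, (y * Ψ x).trace = (Φ y * x).trace)
    (x : Matrix (Fin n) (Fin n) ℂ) : Ψ (xᴴ) = (Ψ x)ᴴ := by
  apply trace_left_cancel
  intro y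
  rw [hadj]
  calc (Φ y * xᴴ).trace
      = ((xᴴ * Φ y)).trace := Matrix.trace_mul_comm _ _
    _ = ((Φ (yᴴ) * x)ᴴ).trace := by
        rw [Matrix.conjTranspose_mul, putp_star hΦ y, Matrix.conjTranspose_conjTranspose]
    _ = star ((Φ (yᴴ) * x).trace) := Matrix.trace_conjTranspose _
    _ = star ((yᴴ * Ψ x).trace) := by rw [hadj]
    _ = star ((Ψ x * yᴴ).trace) := by rw [Matrix.trace_mul_comm]
    _ = ((Ψ x * yᴴ)ᴴ).trace := (Matrix.trace_conjTranspose _).symm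
    _ = (y * (Ψ x)ᴴ).trace := by
        rw [Matrix.conjTranspose_mul, Matrix.conjTranspose_conjTranspose]

lemma adj_pos (hΦ : IsPUTP Φ)
    (hadj : ∀ x y : Matrix (Fin n) (Fin n) ℂ, (y * Ψ x).trace = (Φ y * x).trace)
    (x : Matrix (Fin n) (Fin n) ℂ) (hx : x.PosSemidef) : (Ψ x).PosSemidef := by
  refine Matrix.PosSemidef.of_dotProduct_mulVec_nonneg ?_ ?_
  · show (Ψ x)ᴴ = Ψ x
    rw [← adj_star hΦ hadj, hx.1.eq]
  · intro u
    have h1 : star u ⬝ᵥ (Ψ x *ᵥ u) = (Matrix.vecMulVec u (star u) * Ψ x).trace :=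
      (trace_vecMulVec_mul u (Ψ x)).symm
    rw [h1, hadj]
    exact trace_mul_psd_nonneg (hΦ.1 _ (vecMulVec_posSemidef u)) hx

lemma adj_putp (hΦ : IsPUTP Φ)
    (hadj : ∀ x y : Matrix (Fin n) (Fin n) ℂ, (y * Ψ x).trace = (Φ y * x).trace) :
    IsPUTP Ψ :=
  ⟨adj_pos hΦ hadj, adj_unital hΦ hadj, adj_trace hΦ hadj⟩

end adjoint

theorem stmt_7 {n : ℕ} (Φ Ψ : Matrix (Fin n) (Fin n) ℂ →ₗ[ℂ] Matrix (Fin n) (Fin n) ℂ)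
    (hΦ : IsPUTP Φ)
    (hadj : ∀ x y : Matrix (Fin n) (Fin n) ℂ, (y * Ψ x).trace = (Φ y * x).trace)
    (D : Matrix (Fin n) (Fin n) ℂ) (hD : D.PosSemidef) (htr : D.trace = 1)
    (hfix : Ψ (Φ D) = D) :
    vnEntropy (Φ D) = vnEntropy D := by
  have hΨ : IsPUTP Ψ := adj_putp hΦ hadj
  have h1 : vnEntropy D ≤ vnEntropy (Φ D) := vnEntropy_le hΦ hD
  have h2 : vnEntropy (Φ D) ≤ vnEntropy (Ψ (Φ D)) := vnEntropy_le hΨ (hΦ.1 D hD)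
  rw [hfix] at h2
  linarith
end

section
/- For a state ρ on M_n(ℂ) and a positive unital trace-preserving map Φ, the following are equivalent: (i) S(Φ(D_ρ)) = S(D_ρ); (ii) the decreasingly ordered eigenvalue vectors of D_ρ and Φ(D_ρ) coincide; (iii) Φ(D_ρ) = u D_ρ u* for some unitary u; (iv) Φ*(Φ(D_ρ)) = D_ρ. -/
open Matrix BigOperators ComplexOrder

namespace StmtAux

variable {n : ℕ}





local notation "M" => Matrix (Fin n) (Fin n) ℂ

section
open scoped MatrixOrder Matrix.Norms.L2Operator
lemma psd_exists_ct {A : Matrix (Fin n) (Fin n) ℂ} (hA : A.PosSemidef) :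
    ∃ C : Matrix (Fin n) (Fin n) ℂ, A = Cᴴ * C := by
  obtain ⟨B, hB⟩ := CStarAlgebra.nonneg_iff_eq_star_mul_self.mp hA.nonneg
  exact ⟨B, hB⟩
end

lemma trace_psd_nonneg {A : M} (hA : A.PosSemidef) : 0 ≤ A.trace := by
  rw [Matrix.trace]
  refine Finset.sum_nonneg fun i _ => ?_
  have := hA.dotProduct_mulVec_nonneg (Pi.single i 1)
  simpa [Matrix.mulVec_single, Matrix.diag, dotProduct, Pi.single_apply] using this

lemma trace_mul_psd_nonneg {A B : M} (hA : A.PosSemidef) (hB : B.PosSemidef) :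
    0 ≤ (A * B).trace := by
  obtain ⟨C, rfl⟩ := psd_exists_ct hA
  rw [Matrix.mul_assoc, Matrix.trace_mul_comm]
  exact trace_psd_nonneg (by simpa [Matrix.mul_assoc] using hB.mul_mul_conjTranspose_same C)

lemma psd_trace_eq_zero {A : M} (hA : A.PosSemidef) (h : A.trace = 0) : A = 0 := by
  obtain ⟨C, rfl⟩ := psd_exists_ct hA
  suffices hC : C = 0 by simp [hC]
  have h2 : ∑ j, ∑ k, Complex.normSq (C k j) = 0 := by
    have := congrArg Complex.re h
    simpa [Matrix.trace, Matrix.diag, Matrix.mul_apply, Matrix.conjTranspose_apply,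
      Complex.normSq_eq_conj_mul_self, Complex.normSq_apply] using this
  ext k j
  have h3 : ∀ j ∈ Finset.univ, (0:ℝ) ≤ ∑ k, Complex.normSq (C k j) :=
    fun j _ => Finset.sum_nonneg fun k _ => Complex.normSq_nonneg _
  have h4 := (Finset.sum_eq_zero_iff_of_nonneg h3).mp h2 j (Finset.mem_univ j)
  have h5 := (Finset.sum_eq_zero_iff_of_nonneg
    (fun k _ => Complex.normSq_nonneg (C k j))).mp h4 k (Finset.mem_univ k)
  simpa using Complex.normSq_eq_zero.mp h5

lemma psd_mul_eq_zero_of_trace {A B : M} (hA : A.PosSemidef) (hB : B.PosSemidef)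
    (h : (A * B).trace = 0) : A * B = 0 := by
  obtain ⟨C, rfl⟩ := psd_exists_ct hA
  obtain ⟨E, rfl⟩ := psd_exists_ct hB
  have h1 : (C * (Eᴴ * E) * Cᴴ).trace = 0 := by
    rw [Matrix.trace_mul_cycle]
    simpa [Matrix.mul_assoc] using h
  have h2 : (C * (Eᴴ * E) * Cᴴ) = 0 :=
    psd_trace_eq_zero ((Matrix.posSemidef_conjTranspose_mul_self E).mul_mul_conjTranspose_same C) h1
  have h3 : (E * Cᴴ)ᴴ * (E * Cᴴ) = 0 := by
    simpa [Matrix.conjTranspose_mul, Matrix.mul_assoc] using h2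
  have h4 : E * Cᴴ = 0 := Matrix.conjTranspose_mul_self_eq_zero.mp h3
  have h5 : C * Eᴴ = 0 := by
    have := congrArg Matrix.conjTranspose h4
    simpa [Matrix.conjTranspose_mul] using this
  calc Cᴴ * C * (Eᴴ * E) = Cᴴ * (C * Eᴴ) * E := by rw [Matrix.mul_assoc, Matrix.mul_assoc, Matrix.mul_assoc]
  _ = 0 := by rw [h5]; simp

/-- trace pairing nondegenerate -/
lemma eq_of_forall_trace_mul_eq {A B : M} (h : ∀ y : M, (y * A).trace = (y * B).trace) :
    A = B := by
  ext i j
  have := h (Matrix.single j i 1)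
  simpa [Matrix.trace, Matrix.diag, Matrix.mul_apply, Matrix.single,
    Finset.sum_ite_eq, Matrix.of_apply, ite_and] using this






noncomputable def sproj {A : Matrix (Fin n) (Fin n) ℂ} (hA : A.IsHermitian) (i : Fin n) :
    Matrix (Fin n) (Fin n) ℂ :=
  (hA.eigenvectorUnitary : Matrix (Fin n) (Fin n) ℂ) * Matrix.single i i 1 *
    star (hA.eigenvectorUnitary : Matrix (Fin n) (Fin n) ℂ)

section Spectral

variable {A : Matrix (Fin n) (Fin n) ℂ} (hA : A.IsHermitian)

lemma unitary_mul_star :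
    (hA.eigenvectorUnitary : Matrix (Fin n) (Fin n) ℂ) *
      star (hA.eigenvectorUnitary : Matrix (Fin n) (Fin n) ℂ) = 1 :=
  Matrix.mem_unitaryGroup_iff.mp (hA.eigenvectorUnitary).2

lemma star_mul_unitary :
    star (hA.eigenvectorUnitary : Matrix (Fin n) (Fin n) ℂ) *
      (hA.eigenvectorUnitary : Matrix (Fin n) (Fin n) ℂ) = 1 :=
  Matrix.mem_unitaryGroup_iff'.mp (hA.eigenvectorUnitary).2

lemma stdBasis_diag_conjTranspose (i : Fin n) :
    (Matrix.single i i (1:ℂ))ᴴ = Matrix.single i i 1 := by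
  ext a b
  simp [Matrix.conjTranspose_apply, Matrix.single, and_comm]

lemma sproj_hermitian (i : Fin n) : (sproj hA i).IsHermitian := by
  unfold sproj
  unfold Matrix.IsHermitian
  rw [Matrix.star_eq_conjTranspose]
  simp only [Matrix.conjTranspose_mul, Matrix.conjTranspose_conjTranspose,
    stdBasis_diag_conjTranspose, Matrix.mul_assoc, Matrix.star_eq_conjTranspose]

lemma sproj_mul (i j : Fin n) :
    sproj hA i * sproj hA j = if i = j then sproj hA i else 0 := by
  set U : Matrix (Fin n) (Fin n) ℂ := (hA.eigenvectorUnitary : Matrix (Fin n) (Fin n) ℂ) with hU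
  have hsu : star U * U = 1 := star_mul_unitary hA
  have key : ∀ X Y : Matrix (Fin n) (Fin n) ℂ,
      (U * X * star U) * (U * Y * star U) = U * (X * Y) * star U := by
    intro X Y
    simp only [Matrix.mul_assoc]
    rw [show star U * (U * (Y * star U)) = Y * star U by
      rw [← Matrix.mul_assoc, hsu, Matrix.one_mul]]
  unfold sproj
  rw [← hU, key]
  by_cases h : i = j
  · subst h
    rw [if_pos rfl, Matrix.single_mul_single_same, mul_one]
  · rw [if_neg h, Matrix.single_mul_single_of_ne (h := h), Matrix.mul_zero, Matrix.zero_mul]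

lemma sum_stdBasis_diag : ∑ i : Fin n, Matrix.single i i (1:ℂ) = 1 := by
  ext a b
  rw [Matrix.sum_apply]
  simp [Matrix.single, Matrix.one_apply, Finset.sum_ite_eq, ite_and, eq_comm]

lemma sproj_sum : ∑ i, sproj hA i = 1 := by
  unfold sproj
  rw [← Finset.sum_mul, ← Matrix.mul_sum, sum_stdBasis_diag, Matrix.mul_one, unitary_mul_star hA]

lemma sproj_trace (i : Fin n) : (sproj hA i).trace = 1 := by
  unfold sproj
  rw [Matrix.trace_mul_cycle, star_mul_unitary hA, Matrix.one_mul]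
  simp [Matrix.trace, Matrix.diag, Matrix.single, Finset.sum_ite_eq]

lemma sproj_posSemidef (i : Fin n) : (sproj hA i).PosSemidef := by
  have h1 : (Matrix.single i i (1:ℂ)).PosSemidef := by
    have := Matrix.posSemidef_conjTranspose_mul_self (Matrix.single i i (1:ℂ))
    rwa [stdBasis_diag_conjTranspose, Matrix.single_mul_single_same, mul_one] at this
  have := h1.mul_mul_conjTranspose_same (hA.eigenvectorUnitary : Matrix (Fin n) (Fin n) ℂ)
  rwa [← Matrix.star_eq_conjTranspose] at this

lemma sproj_trace_mul (i j : Fin n) :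
    (sproj hA i * sproj hA j).trace = if i = j then 1 else 0 := by
  rw [sproj_mul hA i j]
  by_cases h : i = j <;> simp [h, sproj_trace hA]

lemma sproj_spectral : A = ∑ i, (hA.eigenvalues i : ℂ) • sproj hA i := by
  have hd : Matrix.diagonal (RCLike.ofReal ∘ hA.eigenvalues : Fin n → ℂ) =
      ∑ i, (hA.eigenvalues i : ℂ) • Matrix.single i i 1 := by
    ext a b
    rw [Matrix.sum_apply]
    by_cases h : a = b
    · subst h
      simp [Matrix.diagonal, Matrix.single, Finset.sum_ite_eq, ite_and]
    · simp [Matrix.diagonal_apply_ne _ h, Matrix.single, ite_and, h]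
  conv_lhs => rw [hA.spectral_theorem, Unitary.conjStarAlgAut_apply]
  rw [hd, Matrix.mul_sum, Finset.sum_mul]
  congr 1
  ext i
  unfold sproj
  rw [Matrix.mul_smul, Matrix.smul_mul]

end Spectral




lemma eta_eq : eta = Real.negMulLog := by
  funext t; simp [eta, Real.negMulLog, neg_mul]



lemma jensen_core {lam mu : Fin n → ℝ} {B : Fin n → Fin n → ℝ}
    (hB0 : ∀ i j, 0 ≤ B i j) (hrow : ∀ i, ∑ j, B i j = 1) (hcol : ∀ j, ∑ i, B i j = 1)
    (hlam : ∀ j, 0 ≤ lam j) (hmu : ∀ i, mu i = ∑ j, B i j * lam j) :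
    ∑ j, eta (lam j) ≤ ∑ i, eta (mu i) ∧
      (∑ i, eta (mu i) = ∑ j, eta (lam j) → ∀ i j, B i j ≠ 0 → mu i = lam j) := by
  have hconc := Real.strictConcaveOn_negMulLog
  have hJ : ∀ i, ∑ j, B i j * eta (lam j) ≤ eta (mu i) := by
    intro i
    rw [hmu i, eta_eq]
    have := hconc.concaveOn.le_map_sum (t := Finset.univ) (w := B i) (p := lam)
      (fun j _ => hB0 i j) (hrow i) (fun j _ => hlam j)
    simpa [smul_eq_mul] using this
  have hsum : ∑ i, ∑ j, B i j * eta (lam j) = ∑ j, eta (lam j) := by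
    rw [Finset.sum_comm]
    refine Finset.sum_congr rfl fun j _ => ?_
    rw [← Finset.sum_mul, hcol j, one_mul]
  constructor
  · calc ∑ j, eta (lam j) = ∑ i, ∑ j, B i j * eta (lam j) := hsum.symm
      _ ≤ ∑ i, eta (mu i) := Finset.sum_le_sum fun i _ => hJ i
  · intro heq i j hBij
    have hBpos : 0 < B i j := lt_of_le_of_ne (hB0 i j) (Ne.symm hBij)
    -- equality for each i
    have heach : ∀ i, eta (mu i) = ∑ j, B i j * eta (lam j) := by
      have hle : ∀ i ∈ Finset.univ, ∑ j, B i j * eta (lam j) ≤ eta (mu i) :=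
        fun i _ => hJ i
      have : ∑ i, ∑ j, B i j * eta (lam j) = ∑ i, eta (mu i) := by rw [hsum, heq]
      intro i'
      exact ((Finset.sum_eq_sum_iff_of_le hle).mp this i' (Finset.mem_univ i')).symm
    -- strict concavity on the support of row i
    set t : Finset (Fin n) := Finset.univ.filter (fun k => 0 < B i k) with ht
    have hsub : ∀ (g : Fin n → ℝ), ∑ k ∈ t, B i k * g k = ∑ k, B i k * g k := by
      intro g
      refine Finset.sum_subset (Finset.filter_subset _ _) fun k _ hk => ?_
      have : B i k = 0 := by
        by_contra h
        exact hk (Finset.mem_filter.mpr ⟨Finset.mem_univ k, lt_of_le_of_ne (hB0 i k) (Ne.symm h)⟩)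
      rw [this, zero_mul]
    have hsum1 : ∑ k ∈ t, B i k = 1 := by
      have := hsub (fun _ => 1)
      simpa [hrow i] using this
    have hkey := hconc.eq_of_map_sum_eq (t := t) (w := B i) (p := lam)
      (fun k hk => (Finset.mem_filter.mp hk).2) hsum1 (fun k _ => hlam k) ?_
    · -- all lam equal on t, deduce mu i = lam j
      have hjt : j ∈ t := Finset.mem_filter.mpr ⟨Finset.mem_univ j, hBpos⟩
      have : mu i = ∑ k ∈ t, B i k * lam j := by
        rw [hmu i, ← hsub lam]
        exact Finset.sum_congr rfl fun k hk => by rw [hkey hk hjt]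
      rw [this, ← Finset.sum_mul, hsum1, one_mul]
    · -- the equality hypothesis for eq_of_map_sum_eq
      have e1 : ∑ k ∈ t, B i k • lam k = mu i := by
        simp only [smul_eq_mul]; rw [hsub lam, ← hmu i]
      have e2 : ∑ k ∈ t, B i k • Real.negMulLog (lam k) = eta (mu i) := by
        simp only [smul_eq_mul, ← eta_eq]
        rw [hsub (fun k => eta (lam k)), ← heach i]
      rw [e1, e2, ← eta_eq]



section Bridge

variable (Φ : Matrix (Fin n) (Fin n) ℂ →ₗ[ℂ] Matrix (Fin n) (Fin n) ℂ)
variable {X : Matrix (Fin n) (Fin n) ℂ}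

lemma bridge (hpos : ∀ x, x.PosSemidef → (Φ x).PosSemidef) (hone : Φ 1 = 1)
    (htrp : ∀ x, (Φ x).trace = x.trace) (hX : X.PosSemidef) (hH : (Φ X).IsHermitian) :
    (∀ i j, ((sproj hH i * Φ (sproj hX.1 j)).trace) =
        ((((sproj hH i * Φ (sproj hX.1 j)).trace).re : ℝ) : ℂ) ∧
        0 ≤ ((sproj hH i * Φ (sproj hX.1 j)).trace).re) ∧
    (∀ i, ∑ j, ((sproj hH i * Φ (sproj hX.1 j)).trace).re = 1) ∧
    (∀ j, ∑ i, ((sproj hH i * Φ (sproj hX.1 j)).trace).re = 1) ∧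
    (∀ i, hH.eigenvalues i =
        ∑ j, ((sproj hH i * Φ (sproj hX.1 j)).trace).re * hX.1.eigenvalues j) := by
  have hreal : ∀ i j, ((sproj hH i * Φ (sproj hX.1 j)).trace) =
      ((((sproj hH i * Φ (sproj hX.1 j)).trace).re : ℝ) : ℂ) ∧
      0 ≤ ((sproj hH i * Φ (sproj hX.1 j)).trace).re := by
    intro i j
    have h1 : 0 ≤ (sproj hH i * Φ (sproj hX.1 j)).trace :=
      trace_mul_psd_nonneg (sproj_posSemidef hH i) (hpos _ (sproj_posSemidef hX.1 j))
    obtain ⟨hre, him⟩ := Complex.nonneg_iff.mp h1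
    exact ⟨by rw [Complex.ext_iff]; simp [← him], hre⟩
  refine ⟨hreal, ?_, ?_, ?_⟩
  · -- rows
    intro i
    have hc : ∑ j, (sproj hH i * Φ (sproj hX.1 j)).trace = 1 := by
      rw [← Matrix.trace_sum]
      have : ∑ j, sproj hH i * Φ (sproj hX.1 j) = sproj hH i * Φ (∑ j, sproj hX.1 j) := by
        rw [map_sum, Matrix.mul_sum]
      rw [this, sproj_sum hX.1, hone, Matrix.mul_one, sproj_trace hH i]
    have := congrArg Complex.re hc
    simpa [Complex.re_sum] using this
  · -- cols
    intro j
    have hc : ∑ i, (sproj hH i * Φ (sproj hX.1 j)).trace = 1 := by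
      rw [← Matrix.trace_sum]
      have : ∑ i, sproj hH i * Φ (sproj hX.1 j) = (∑ i, sproj hH i) * Φ (sproj hX.1 j) := by
        rw [Finset.sum_mul]
      rw [this, sproj_sum hH, Matrix.one_mul, htrp, sproj_trace hX.1 j]
    have := congrArg Complex.re hc
    simpa [Complex.re_sum] using this
  · -- eigenvalue formula
    intro i
    have h1 : (sproj hH i * Φ X).trace = (hH.eigenvalues i : ℂ) := by
      have hc := congrArg (fun Y => (sproj hH i * Y).trace) (sproj_spectral hH)
      rw [hc, Matrix.mul_sum, Matrix.trace_sum]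
      have hterm : ∀ k, (sproj hH i * ((hH.eigenvalues k : ℂ) • sproj hH k)).trace =
          (hH.eigenvalues k : ℂ) * (if i = k then 1 else 0) := by
        intro k
        rw [Matrix.mul_smul, Matrix.trace_smul, sproj_trace_mul hH i k, smul_eq_mul]
      simp only [hterm]
      simp
    have h2 : (sproj hH i * Φ X).trace =
        ∑ j, (hX.1.eigenvalues j : ℂ) * (sproj hH i * Φ (sproj hX.1 j)).trace := by
      have hc := congrArg (fun Y => (sproj hH i * Φ Y).trace) (sproj_spectral hX.1)
      rw [hc, map_sum, Matrix.mul_sum, Matrix.trace_sum]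
      refine Finset.sum_congr rfl fun j _ => ?_
      rw [_root_.map_smul, Matrix.mul_smul, Matrix.trace_smul, smul_eq_mul]
    have h4 : ∑ j, (hX.1.eigenvalues j : ℂ) * (sproj hH i * Φ (sproj hX.1 j)).trace =
        ∑ j, ((((sproj hH i * Φ (sproj hX.1 j)).trace).re * hX.1.eigenvalues j : ℝ) : ℂ) :=
      Finset.sum_congr rfl fun j _ => by
        conv_lhs => rw [(hreal i j).1]
        push_cast; ring
    have h3 : ((hH.eigenvalues i : ℝ) : ℂ) =
        ((∑ j, ((sproj hH i * Φ (sproj hX.1 j)).trace).re * hX.1.eigenvalues j : ℝ) : ℂ) := by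
      rw [← h1, h2, h4, Complex.ofReal_sum]
    exact_mod_cast h3

lemma entropy_le (hpos : ∀ x, x.PosSemidef → (Φ x).PosSemidef) (hone : Φ 1 = 1)
    (htrp : ∀ x, (Φ x).trace = x.trace) (hX : X.PosSemidef) :
    vnEntropy X ≤ vnEntropy (Φ X) := by
  have hH : (Φ X).IsHermitian := (hpos X hX).1
  obtain ⟨hreal, hrow, hcol, hmu⟩ := bridge Φ hpos hone htrp hX hH
  have hj := jensen_core (lam := hX.1.eigenvalues) (mu := hH.eigenvalues)
    (B := fun i j => ((sproj hH i * Φ (sproj hX.1 j)).trace).re)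
    (fun i j => (hreal i j).2) hrow hcol (fun j => hX.eigenvalues_nonneg j) hmu
  rw [vnEntropy, vnEntropy, dif_pos hX.1, dif_pos hH]
  exact hj.1

end Bridge

section PSum

variable {A : Matrix (Fin n) (Fin n) ℂ} (hA : A.IsHermitian)

lemma psum_posSemidef (S : Finset (Fin n)) : (∑ j ∈ S, sproj hA j).PosSemidef := by
  classical
  refine Finset.sum_induction _ _ (fun a b ha hb => ha.add hb) Matrix.PosSemidef.zero
    (fun j _ => sproj_posSemidef hA j)

lemma one_sub_psum (S : Finset (Fin n)) :
    1 - ∑ j ∈ S, sproj hA j = ∑ j ∈ Sᶜ, sproj hA j := by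
  have := Finset.sum_compl_add_sum S (fun j => sproj hA j)
  rw [sproj_sum hA] at this
  -- this : ∑ j ∈ Sᶜ, sproj hA j + ∑ j ∈ S, sproj hA j = 1
  rw [← this]; abel

lemma one_sub_psum_posSemidef (S : Finset (Fin n)) :
    (1 - ∑ j ∈ S, sproj hA j).PosSemidef := by
  rw [one_sub_psum hA S]; exact psum_posSemidef hA _

lemma psum_mul_psum (S : Finset (Fin n)) :
    (∑ j ∈ S, sproj hA j) * (∑ k ∈ S, sproj hA k) = ∑ j ∈ S, sproj hA j := by
  rw [Finset.sum_mul_sum]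
  have : ∀ j ∈ S, ∑ k ∈ S, sproj hA j * sproj hA k = sproj hA j := by
    intro j hj
    have : ∀ k ∈ S, sproj hA j * sproj hA k = if k = j then sproj hA j else 0 := by
      intro k _
      rw [sproj_mul hA j k]
      by_cases h : j = k <;> simp [h, eq_comm]
    rw [Finset.sum_congr rfl this, Finset.sum_ite_eq' S j (fun _ => sproj hA j), if_pos hj]
  exact Finset.sum_congr rfl this

lemma psum_trace (S : Finset (Fin n)) :
    (∑ j ∈ S, sproj hA j).trace = (S.card : ℂ) := by
  rw [Matrix.trace_sum]
  simp [sproj_trace hA]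

end PSum

/-- The key projection-mapping lemma: a positive unital trace-preserving map sends
a spectral projection `P` onto `Q` as soon as the trace pairing forces it. -/
lemma map_proj_eq (Θ : Matrix (Fin n) (Fin n) ℂ →ₗ[ℂ] Matrix (Fin n) (Fin n) ℂ)
    (hpos : ∀ x, x.PosSemidef → (Θ x).PosSemidef) (hone : Θ 1 = 1)
    (htrp : ∀ x, (Θ x).trace = x.trace) {P Q : Matrix (Fin n) (Fin n) ℂ}
    (hP : P.PosSemidef) (hP1 : (1 - P).PosSemidef)
    (hQ : Q.PosSemidef) (hQ1 : (1 - Q).PosSemidef) (hQ2 : Q * Q = Q)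
    (htrQ : Q.trace = P.trace) (h : (Q * Θ P).trace = P.trace) : Θ P = Q := by
  have hT : (Θ P).PosSemidef := hpos P hP
  have h1 : ((1 - Q) * Θ P).trace = 0 := by
    rw [Matrix.sub_mul, Matrix.one_mul]
    rw [show ((Θ P - Q * Θ P).trace) = (Θ P).trace - (Q * Θ P).trace from
      Matrix.trace_sub _ _]
    rw [htrp, h, sub_self]
  have h2 : (1 - Q) * Θ P = 0 := psd_mul_eq_zero_of_trace hQ1 hT h1
  have h3 : Θ P = Q * Θ P := by
    have := sub_eq_zero.mp (by rw [← h2]; rw [Matrix.sub_mul, Matrix.one_mul])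
    linear_combination (norm := noncomm_ring) this
  have h4 : Θ P = Θ P * Q := by
    have := congrArg Matrix.conjTranspose h3
    rwa [Matrix.conjTranspose_mul, hT.1.eq, hQ.1.eq] at this
  have h5 : Q - Θ P = Q * (1 - Θ P) * Q := by
    rw [Matrix.mul_sub, Matrix.mul_one, Matrix.sub_mul, hQ2, ← h3, ← h4]
  have h6 : (1 - Θ P).PosSemidef := by
    have := hpos _ hP1
    rwa [map_sub, hone] at this
  have h7 : (Q - Θ P).PosSemidef := by
    rw [h5]
    have := h6.mul_mul_conjTranspose_same Q
    rwa [hQ.1.eq] at this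
  have h8 : (Q - Θ P).trace = 0 := by
    rw [Matrix.trace_sub, htrp, htrQ, sub_self]
  have := psd_trace_eq_zero h7 h8
  have := sub_eq_zero.mp this
  exact this.symm

section Adjoint

variable (Φ Ψ : Matrix (Fin n) (Fin n) ℂ →ₗ[ℂ] Matrix (Fin n) (Fin n) ℂ)

lemma phi_map_hermitian (hpos : ∀ x, x.PosSemidef → (Φ x).PosSemidef)
    {x : Matrix (Fin n) (Fin n) ℂ} (hx : x.IsHermitian) : (Φ x).IsHermitian := by
  have h2 : Φ x = ∑ i, ((hx.eigenvalues i : ℂ)) • Φ (sproj hx i) := by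
    have := congrArg Φ (sproj_spectral hx)
    rw [map_sum] at this
    simpa only [_root_.map_smul] using this
  rw [h2]
  refine Finset.sum_induction _ _ (fun a b ha hb => ha.add hb) Matrix.isHermitian_zero
    (fun i _ => ?_)
  have hherm : (Φ (sproj hx i)).IsHermitian := (hpos _ (sproj_posSemidef hx i)).1
  unfold Matrix.IsHermitian
  rw [Matrix.conjTranspose_smul, hherm.eq]
  congr 1
  simp [Complex.star_def, Complex.conj_ofReal]

lemma phi_conjTranspose (hpos : ∀ x, x.PosSemidef → (Φ x).PosSemidef)
    (y : Matrix (Fin n) (Fin n) ℂ) : (Φ yᴴ)ᴴ = Φ y := by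
  have hhH : ((1/2 : ℂ) • (y + yᴴ)).IsHermitian := by
    unfold Matrix.IsHermitian
    rw [Matrix.conjTranspose_smul, Matrix.conjTranspose_add,
      Matrix.conjTranspose_conjTranspose]
    rw [show star (1/2 : ℂ) = 1/2 by simp]
    rw [add_comm]
  have hkH : ((-(Complex.I)/2) • (y - yᴴ)).IsHermitian := by
    unfold Matrix.IsHermitian
    rw [Matrix.conjTranspose_smul, Matrix.conjTranspose_sub,
      Matrix.conjTranspose_conjTranspose]
    rw [show star (-(Complex.I)/2 : ℂ) = Complex.I/2 by
      simp [Complex.star_def, Complex.ext_iff]]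
    match_scalars <;> ring
  have hΦh := (phi_map_hermitian Φ hpos hhH).eq
  have hΦk := (phi_map_hermitian Φ hpos hkH).eq
  have hImul : Complex.I * (-(Complex.I)/2) = 1/2 := by
    rw [show Complex.I * (-(Complex.I)/2) = -(Complex.I * Complex.I)/2 by ring,
      Complex.I_mul_I]
    norm_num
  have hy : y = (1/2 : ℂ) • (y + yᴴ) + Complex.I • ((-(Complex.I)/2) • (y - yᴴ)) := by
    rw [smul_smul, hImul]
    match_scalars <;> ring
  have hyH : yᴴ = (1/2 : ℂ) • (y + yᴴ) - Complex.I • ((-(Complex.I)/2) • (y - yᴴ)) := by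
    rw [smul_smul, hImul]
    match_scalars <;> ring
  calc (Φ yᴴ)ᴴ
      = (Φ ((1/2 : ℂ) • (y + yᴴ)) - Complex.I • Φ ((-(Complex.I)/2) • (y - yᴴ)))ᴴ := by
        rw [← _root_.map_smul, ← map_sub, ← hyH]
    _ = Φ ((1/2 : ℂ) • (y + yᴴ)) + Complex.I • Φ ((-(Complex.I)/2) • (y - yᴴ)) := by
        rw [Matrix.conjTranspose_sub, Matrix.conjTranspose_smul, hΦh, hΦk]
        rw [show star (Complex.I) = -Complex.I from Complex.conj_I]
        rw [sub_eq_add_neg, ← neg_smul, neg_neg]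
    _ = Φ y := by rw [← _root_.map_smul, ← map_add, ← hy]

variable (hadj : ∀ x y : Matrix (Fin n) (Fin n) ℂ, (y * Ψ x).trace = (Φ y * x).trace)

include hadj

lemma psi_trace (hone : Φ 1 = 1) (x : Matrix (Fin n) (Fin n) ℂ) : (Ψ x).trace = x.trace := by
  have := hadj x 1
  rwa [Matrix.one_mul, hone, Matrix.one_mul] at this

lemma psi_one (htrp : ∀ x, (Φ x).trace = x.trace) : Ψ 1 = 1 := by
  refine eq_of_forall_trace_mul_eq fun y => ?_
  rw [hadj 1 y, Matrix.mul_one, Matrix.mul_one, htrp]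

lemma psi_hermitian (hpos : ∀ x, x.PosSemidef → (Φ x).PosSemidef)
    {x : Matrix (Fin n) (Fin n) ℂ} (hx : x.IsHermitian) : (Ψ x).IsHermitian := by
  have goal : (Ψ x)ᴴ = Ψ x := by
    refine eq_of_forall_trace_mul_eq fun y => ?_
    have e1 : (y * (Ψ x)ᴴ).trace = star ((yᴴ * Ψ x).trace) := by
      rw [← Matrix.trace_conjTranspose, Matrix.conjTranspose_mul,
        Matrix.conjTranspose_conjTranspose, Matrix.trace_mul_comm]
    rw [e1, hadj x yᴴ]
    rw [show star ((Φ yᴴ * x).trace) = ((Φ yᴴ * x)ᴴ).trace from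
      (Matrix.trace_conjTranspose _).symm]
    rw [Matrix.conjTranspose_mul, hx.eq, phi_conjTranspose Φ hpos y,
      Matrix.trace_mul_comm, hadj x y]
  exact goal

omit hadj in
lemma trace_mul_vecMulVec (A : Matrix (Fin n) (Fin n) ℂ) (v : Fin n → ℂ) :
    (A * Matrix.vecMulVec v (star v)).trace = dotProduct (star v) (A *ᵥ v) := by
  simp only [Matrix.trace, Matrix.diag, Matrix.mul_apply, Matrix.vecMulVec_apply,
    dotProduct, Matrix.mulVec, Pi.star_apply]
  refine Finset.sum_congr rfl fun a _ => ?_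
  rw [Finset.mul_sum]
  refine Finset.sum_congr rfl fun b _ => by ring

omit hadj in
lemma vecMulVec_posSemidef (v : Fin n → ℂ) : (Matrix.vecMulVec v (star v)).PosSemidef := by
  have heq : Matrix.vecMulVec v (star v) = (Matrix.replicateRow (Fin 1) (star v))ᴴ *
      Matrix.replicateRow (Fin 1) (star v) := by
    ext a b
    simp [Matrix.vecMulVec_apply, Matrix.mul_apply, Matrix.conjTranspose_apply, Matrix.replicateRow]
  rw [heq]
  exact Matrix.posSemidef_conjTranspose_mul_self _

lemma psi_pos (hpos : ∀ x, x.PosSemidef → (Φ x).PosSemidef)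
    {x : Matrix (Fin n) (Fin n) ℂ} (hx : x.PosSemidef) : (Ψ x).PosSemidef := by
  refine Matrix.PosSemidef.of_dotProduct_mulVec_nonneg (psi_hermitian Φ Ψ hadj hpos hx.1) fun v => ?_
  have e1 : dotProduct (star v) (Ψ x *ᵥ v) =
      (Matrix.vecMulVec v (star v) * Ψ x).trace := by
    rw [Matrix.trace_mul_comm, trace_mul_vecMulVec (Ψ x) v]
  rw [e1, hadj]
  exact trace_mul_psd_nonneg (hpos _ (vecMulVec_posSemidef v)) hx

end Adjoint

lemma exists_perm_of_card_fibers_eq {f g : Fin n → ℝ}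
    (h : ∀ t : ℝ, (Finset.univ.filter (fun i => g i = t)).card =
      (Finset.univ.filter (fun j => f j = t)).card) :
    ∃ σ : Equiv.Perm (Fin n), ∀ i, g (σ i) = f i := by
  classical
  have e : ∀ t : ℝ, { a // f a = t } ≃ { b // g b = t } := by
    intro t
    apply Fintype.equivOfCardEq
    rw [Fintype.card_subtype, Fintype.card_subtype, h t]
  exact ⟨Equiv.ofFiberEquiv e, fun i => Equiv.ofFiberEquiv_map e i⟩

section Perm

variable (σ : Equiv.Perm (Fin n))

noncomputable def permMat (σ : Equiv.Perm (Fin n)) : Matrix (Fin n) (Fin n) ℂ :=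
  Matrix.of (fun i j => if i = σ j then 1 else 0)

lemma permMat_mul_star : permMat σ * star (permMat σ) = 1 := by
  ext a b
  simp only [Matrix.mul_apply, Matrix.star_eq_conjTranspose, Matrix.conjTranspose_apply,
    permMat, Matrix.of_apply, Matrix.one_apply]
  have : ∀ k, (if a = σ k then (1:ℂ) else 0) * star (if b = σ k then (1:ℂ) else 0) =
      if k = σ.symm a then (if b = σ k then (1:ℂ) else 0) else 0 := by
    intro k
    by_cases h2 : k = σ.symm a
    · have h1 : a = σ k := by rw [h2, Equiv.apply_symm_apply]
      rw [if_pos h1, if_pos h2, one_mul]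
      by_cases hb : b = σ k <;> simp [hb]
    · have h1 : ¬ a = σ k := fun h => h2 (by rw [h, Equiv.symm_apply_apply])
      rw [if_neg h1, if_neg h2, zero_mul]
  rw [Finset.sum_congr rfl (fun k _ => this k), Finset.sum_ite_eq' Finset.univ (σ.symm a)]
  simp only [Finset.mem_univ, if_true, Equiv.apply_symm_apply]
  by_cases h : a = b <;> simp [h, eq_comm]

lemma star_mul_permMat : star (permMat σ) * permMat σ = 1 := by
  ext a b
  simp only [Matrix.mul_apply, Matrix.star_eq_conjTranspose, Matrix.conjTranspose_apply,
    permMat, Matrix.of_apply, Matrix.one_apply]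
  have : ∀ k, star (if k = σ a then (1:ℂ) else 0) * (if k = σ b then (1:ℂ) else 0) =
      if k = σ a then (if k = σ b then (1:ℂ) else 0) else 0 := by
    intro k
    by_cases h1 : k = σ a <;> simp_all
  rw [Finset.sum_congr rfl (fun k _ => this k), Finset.sum_ite_eq' Finset.univ (σ a)]
  simp only [Finset.mem_univ, if_true]
  by_cases h : a = b <;> simp [h, σ.injective.eq_iff]

lemma permMat_diag_conj (d : Fin n → ℂ) :
    permMat σ * Matrix.diagonal d * star (permMat σ) = Matrix.diagonal (d ∘ σ.symm) := by
  ext a b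
  simp only [Matrix.mul_apply, Matrix.star_eq_conjTranspose, Matrix.conjTranspose_apply,
    permMat, Matrix.of_apply, Matrix.diagonal_apply]
  have inner : ∀ k, (∑ j, (if a = σ j then (1:ℂ) else 0) * (if j = k then d j else 0)) =
      if a = σ k then d k else 0 := by
    intro k
    rw [Finset.sum_eq_single k]
    · by_cases h : a = σ k <;> simp [h]
    · intro j _ hj; simp [hj]
    · intro h; exact absurd (Finset.mem_univ k) h
  rw [Finset.sum_congr rfl (fun k _ => by rw [inner k])]
  have : ∀ k, (if a = σ k then d k else 0) * star (if b = σ k then (1:ℂ) else 0) =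
      if k = σ.symm a then (if b = σ k then d k else 0) else 0 := by
    intro k
    by_cases h2 : k = σ.symm a
    · have h1 : a = σ k := by rw [h2, Equiv.apply_symm_apply]
      rw [if_pos h1, if_pos h2]
      by_cases hb : b = σ k <;> simp [hb]
    · have h1 : ¬ a = σ k := fun h => h2 (by rw [h, Equiv.symm_apply_apply])
      rw [if_neg h1, if_neg h2, zero_mul]
  rw [Finset.sum_congr rfl (fun k _ => this k), Finset.sum_ite_eq' Finset.univ (σ.symm a)]
  simp only [Finset.mem_univ, if_true, Equiv.apply_symm_apply, Function.comp_apply]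
  by_cases h : a = b
  · subst h; simp
  · rw [if_neg (fun hh => h hh.symm), if_neg h]

end Perm

/-- Two Hermitian matrices with permuted equal spectra are unitarily conjugate. -/
lemma unitary_conj_of_eigenvalues {A B : Matrix (Fin n) (Fin n) ℂ}
    (hA : A.IsHermitian) (hB : B.IsHermitian) (σ : Equiv.Perm (Fin n))
    (hσ : ∀ i, hB.eigenvalues (σ i) = hA.eigenvalues i) :
    ∃ u : Matrix (Fin n) (Fin n) ℂ,
      u * star u = 1 ∧ star u * u = 1 ∧ B = u * A * star u := by
  set V₁ : Matrix (Fin n) (Fin n) ℂ := (hA.eigenvectorUnitary : Matrix (Fin n) (Fin n) ℂ)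
  set V₂ : Matrix (Fin n) (Fin n) ℂ := (hB.eigenvectorUnitary : Matrix (Fin n) (Fin n) ℂ)
  set P : Matrix (Fin n) (Fin n) ℂ := permMat σ
  refine ⟨V₂ * P * star V₁, ?_, ?_, ?_⟩
  · calc V₂ * P * star V₁ * star (V₂ * P * star V₁)
        = V₂ * (P * (star V₁ * (star V₁)ᴴ) * star P) * star V₂ := by
          simp only [Matrix.star_eq_conjTranspose, Matrix.conjTranspose_mul,
            Matrix.mul_assoc, Matrix.conjTranspose_conjTranspose]
      _ = 1 := by
          rw [show star V₁ * (star V₁)ᴴ = 1 by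
            rw [← Matrix.star_eq_conjTranspose, star_star]; exact star_mul_unitary hA]
          rw [Matrix.mul_one, permMat_mul_star σ, Matrix.mul_one, unitary_mul_star hB]
  · calc star (V₂ * P * star V₁) * (V₂ * P * star V₁)
        = (star V₁)ᴴ * (star P * (star V₂ * V₂ * P)) * star V₁ := by
          simp only [Matrix.star_eq_conjTranspose, Matrix.conjTranspose_mul,
            Matrix.mul_assoc, Matrix.conjTranspose_conjTranspose]
      _ = 1 := by
          rw [star_mul_unitary hB, Matrix.one_mul, star_mul_permMat σ, Matrix.mul_one,
            ← Matrix.star_eq_conjTranspose, star_star, unitary_mul_star hA]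
  · have hBev : Matrix.diagonal (RCLike.ofReal ∘ hB.eigenvalues : Fin n → ℂ) =
        P * Matrix.diagonal (RCLike.ofReal ∘ hA.eigenvalues : Fin n → ℂ) * star P := by
      rw [permMat_diag_conj σ]
      have hfun : (RCLike.ofReal ∘ hB.eigenvalues : Fin n → ℂ) =
          (RCLike.ofReal ∘ hA.eigenvalues : Fin n → ℂ) ∘ σ.symm := by
        funext i
        show (RCLike.ofReal (hB.eigenvalues i) : ℂ) = RCLike.ofReal (hA.eigenvalues (σ.symm i))
        rw [← hσ (σ.symm i), Equiv.apply_symm_apply]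
      rw [hfun]
    calc B = V₂ * Matrix.diagonal (RCLike.ofReal ∘ hB.eigenvalues : Fin n → ℂ) * star V₂ :=
          hB.spectral_theorem
      _ = V₂ * (P * Matrix.diagonal (RCLike.ofReal ∘ hA.eigenvalues : Fin n → ℂ) * star P) *
          star V₂ := by rw [← hBev]
      _ = (V₂ * P * star V₁) * (V₁ * Matrix.diagonal (RCLike.ofReal ∘ hA.eigenvalues : Fin n → ℂ)
          * star V₁) * star (V₂ * P * star V₁) := by
          simp only [Matrix.star_eq_conjTranspose, Matrix.conjTranspose_mul,
            Matrix.conjTranspose_conjTranspose, Matrix.mul_assoc]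
          rw [show V₁ᴴ * (V₁ * (Matrix.diagonal (RCLike.ofReal ∘ hA.eigenvalues : Fin n → ℂ) *
            (V₁ᴴ * (V₁ * (Pᴴ * V₂ᴴ))))) = Matrix.diagonal (RCLike.ofReal ∘ hA.eigenvalues :
            Fin n → ℂ) * (Pᴴ * V₂ᴴ) by
            rw [← Matrix.mul_assoc V₁ᴴ V₁, show V₁ᴴ * V₁ = 1 from star_mul_unitary hA,
              Matrix.one_mul, ← Matrix.mul_assoc V₁ᴴ V₁,
              show V₁ᴴ * V₁ = 1 from star_mul_unitary hA, Matrix.one_mul]]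
      _ = (V₂ * P * star V₁) * A * star (V₂ * P * star V₁) := by rw [← (show A = V₁ * Matrix.diagonal (RCLike.ofReal ∘ hA.eigenvalues : Fin n → ℂ) * star V₁ from hA.spectral_theorem)]

/-- Conjugation by a unitary as a linear map. -/
noncomputable def conjMap (u : Matrix (Fin n) (Fin n) ℂ) :
    Matrix (Fin n) (Fin n) ℂ →ₗ[ℂ] Matrix (Fin n) (Fin n) ℂ where
  toFun X := u * X * star u
  map_add' X Y := by noncomm_ring
  map_smul' c X := by
    simp only [RingHom.id_apply, Matrix.mul_smul, Matrix.smul_mul]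

lemma conjMap_pos (u : Matrix (Fin n) (Fin n) ℂ) {X : Matrix (Fin n) (Fin n) ℂ}
    (hX : X.PosSemidef) : ((conjMap u) X).PosSemidef := by
  have := hX.mul_mul_conjTranspose_same u
  rwa [← Matrix.star_eq_conjTranspose] at this

lemma conjMap_one {u : Matrix (Fin n) (Fin n) ℂ} (hu : u * star u = 1) :
    (conjMap u) 1 = 1 := by
  show u * 1 * star u = 1
  rw [Matrix.mul_one, hu]

lemma conjMap_trace {u : Matrix (Fin n) (Fin n) ℂ} (hu : star u * u = 1)
    (X : Matrix (Fin n) (Fin n) ℂ) : ((conjMap u) X).trace = X.trace := by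
  show (u * X * star u).trace = X.trace
  rw [Matrix.trace_mul_cycle, hu, Matrix.one_mul]

lemma vnEntropy_unitary_conj {u X : Matrix (Fin n) (Fin n) ℂ} (hu1 : u * star u = 1)
    (hu2 : star u * u = 1) (hX : X.PosSemidef) :
    vnEntropy (u * X * star u) = vnEntropy X := by
  have h1 : vnEntropy X ≤ vnEntropy ((conjMap u) X) :=
    entropy_le (conjMap u) (fun x hx => conjMap_pos u hx) (conjMap_one hu1)
      (conjMap_trace hu2) hX
  have hXc : ((conjMap u) X).PosSemidef := conjMap_pos u hX
  have h2 : vnEntropy ((conjMap u) X) ≤ vnEntropy ((conjMap (star u)) ((conjMap u) X)) :=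
    entropy_le (conjMap (star u)) (fun x hx => conjMap_pos (star u) hx)
      (conjMap_one (by rwa [star_star])) (conjMap_trace (by rwa [star_star])) hXc
  have h3 : (conjMap (star u)) ((conjMap u) X) = X := by
    show star u * (u * X * star u) * star (star u) = X
    rw [star_star]
    simp only [Matrix.mul_assoc]
    rw [show star u * (u * (X * (star u * u))) = star u * (u * (X * 1)) by rw [hu2],
      Matrix.mul_one, ← Matrix.mul_assoc, hu2, Matrix.one_mul]
  rw [h3] at h2
  exact le_antisymm h2 h1

end StmtAux
theorem stmt_8 {n : ℕ} (Φ Ψ : Matrix (Fin n) (Fin n) ℂ →ₗ[ℂ] Matrix (Fin n) (Fin n) ℂ)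
    (hΦ : IsPUTP Φ)
    (hadj : ∀ x y : Matrix (Fin n) (Fin n) ℂ, (y * Ψ x).trace = (Φ y * x).trace)
    (D : Matrix (Fin n) (Fin n) ℂ) (hD : D.PosSemidef) (htr : D.trace = 1)
    (hH : (Φ D).IsHermitian) :
    List.TFAE
      [ vnEntropy (Φ D) = vnEntropy D,
        ∃ σ : Equiv.Perm (Fin n), ∀ i, hH.eigenvalues (σ i) = hD.1.eigenvalues i,
        ∃ u : Matrix (Fin n) (Fin n) ℂ,
          u * star u = 1 ∧ star u * u = 1 ∧ Φ D = u * D * star u,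
        Ψ (Φ D) = D ] := by
  classical
  open StmtAux in
  obtain ⟨hpos, hone, htrp⟩ := hΦ
  -- the master analysis of the equality case
  have hKey : vnEntropy (Φ D) = vnEntropy D →
      (∀ i j, ((sproj hH i * Φ (sproj hD.1 j)).trace).re ≠ 0 →
          hH.eigenvalues i = hD.1.eigenvalues j) ∧
      (∀ t : ℝ,
        ((Finset.univ.filter (fun i => hH.eigenvalues i = t)).card : ℝ) =
          ∑ i ∈ Finset.univ.filter (fun i => hH.eigenvalues i = t),
            ∑ j ∈ Finset.univ.filter (fun j => hD.1.eigenvalues j = t),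
              ((sproj hH i * Φ (sproj hD.1 j)).trace).re) ∧
      (∀ t : ℝ, (Finset.univ.filter (fun i => hH.eigenvalues i = t)).card =
          (Finset.univ.filter (fun j => hD.1.eigenvalues j = t)).card) := by
    intro heq
    obtain ⟨hreal, hrow, hcol, hmuf⟩ := bridge Φ hpos hone htrp hD hH
    have heq' : ∑ i, eta (hH.eigenvalues i) = ∑ j, eta (hD.1.eigenvalues j) := by
      rw [vnEntropy, vnEntropy, dif_pos hH, dif_pos hD.1] at heq
      exact heq
    have hsupp := (jensen_core (lam := hD.1.eigenvalues) (mu := hH.eigenvalues)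
      (B := fun i j => ((sproj hH i * Φ (sproj hD.1 j)).trace).re)
      (fun i j => (hreal i j).2) hrow hcol (fun j => hD.eigenvalues_nonneg j) hmuf).2 heq'
    refine ⟨hsupp, ?_, ?_⟩
    case _ =>
      -- the double-sum identity for rows
      intro t
      rw [Finset.card_eq_sum_ones, Nat.cast_sum]
      refine Finset.sum_congr rfl fun i hi => ?_
      have hit : hH.eigenvalues i = t := (Finset.mem_filter.mp hi).2
      have hsub : ∑ j ∈ Finset.univ.filter (fun j => hD.1.eigenvalues j = t),
          ((sproj hH i * Φ (sproj hD.1 j)).trace).re =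
          ∑ j, ((sproj hH i * Φ (sproj hD.1 j)).trace).re := by
        refine Finset.sum_subset (Finset.filter_subset _ _) fun j _ hj => ?_
        by_contra hB
        exact hj (Finset.mem_filter.mpr ⟨Finset.mem_univ j, by rw [← hsupp i j hB, hit]⟩)
      rw [hsub, hrow i]
      norm_num
    case _ =>
      intro t
      -- column version
      have hScard : ((Finset.univ.filter (fun j => hD.1.eigenvalues j = t)).card : ℝ) =
          ∑ j ∈ Finset.univ.filter (fun j => hD.1.eigenvalues j = t),
            ∑ i ∈ Finset.univ.filter (fun i => hH.eigenvalues i = t),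
              ((sproj hH i * Φ (sproj hD.1 j)).trace).re := by
        rw [Finset.card_eq_sum_ones, Nat.cast_sum]
        refine Finset.sum_congr rfl fun j hj => ?_
        have hjt : hD.1.eigenvalues j = t := (Finset.mem_filter.mp hj).2
        have hsub : ∑ i ∈ Finset.univ.filter (fun i => hH.eigenvalues i = t),
            ((sproj hH i * Φ (sproj hD.1 j)).trace).re =
            ∑ i, ((sproj hH i * Φ (sproj hD.1 j)).trace).re := by
          refine Finset.sum_subset (Finset.filter_subset _ _) fun i _ hi => ?_
          by_contra hB
          exact hi (Finset.mem_filter.mpr ⟨Finset.mem_univ i, by rw [hsupp i j hB, hjt]⟩)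
        rw [hsub, hcol j]
        norm_num
      have hCcard : ((Finset.univ.filter (fun i => hH.eigenvalues i = t)).card : ℝ) =
          ∑ i ∈ Finset.univ.filter (fun i => hH.eigenvalues i = t),
            ∑ j ∈ Finset.univ.filter (fun j => hD.1.eigenvalues j = t),
              ((sproj hH i * Φ (sproj hD.1 j)).trace).re := by
        rw [Finset.card_eq_sum_ones, Nat.cast_sum]
        refine Finset.sum_congr rfl fun i hi => ?_
        have hit : hH.eigenvalues i = t := (Finset.mem_filter.mp hi).2
        have hsub : ∑ j ∈ Finset.univ.filter (fun j => hD.1.eigenvalues j = t),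
            ((sproj hH i * Φ (sproj hD.1 j)).trace).re =
            ∑ j, ((sproj hH i * Φ (sproj hD.1 j)).trace).re := by
          refine Finset.sum_subset (Finset.filter_subset _ _) fun j _ hj => ?_
          by_contra hB
          exact hj (Finset.mem_filter.mpr ⟨Finset.mem_univ j, by rw [← hsupp i j hB, hit]⟩)
        rw [hsub, hrow i]
        norm_num
      have : ((Finset.univ.filter (fun i => hH.eigenvalues i = t)).card : ℝ) =
          ((Finset.univ.filter (fun j => hD.1.eigenvalues j = t)).card : ℝ) := by
        rw [hCcard, hScard, Finset.sum_comm]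
      exact_mod_cast this
  tfae_have 3 → 1 := by
    rintro ⟨u, hu1, hu2, hu3⟩
    rw [hu3]
    exact StmtAux.vnEntropy_unitary_conj hu1 hu2 hD
  tfae_have 4 → 1 := by
    intro h4
    have h1 := StmtAux.entropy_le Φ hpos hone htrp hD
    have h2 := StmtAux.entropy_le Ψ (fun x hx => StmtAux.psi_pos Φ Ψ hadj hpos hx)
      (StmtAux.psi_one Φ Ψ hadj htrp) (StmtAux.psi_trace Φ Ψ hadj hone) (hpos D hD)
    rw [h4] at h2
    exact le_antisymm h2 h1
  tfae_have 2 → 3 := by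
    rintro ⟨σ, hσ⟩
    exact StmtAux.unitary_conj_of_eigenvalues hD.1 hH σ hσ
  tfae_have 1 → 2 := by
    intro heq
    obtain ⟨hsupp, hsum, hcount⟩ := hKey heq
    exact StmtAux.exists_perm_of_card_fibers_eq hcount
  tfae_have 1 → 4 := by
    intro heq
    obtain ⟨hsupp, hsum, hcount⟩ := hKey heq
    obtain ⟨hreal, hrow, hcol, hmuf⟩ := StmtAux.bridge Φ hpos hone htrp hD hH
    have hpsi_pos : ∀ x : Matrix (Fin n) (Fin n) ℂ, x.PosSemidef → (Ψ x).PosSemidef :=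
      fun x hx => StmtAux.psi_pos Φ Ψ hadj hpos hx
    have hpsi_one : Ψ 1 = 1 := StmtAux.psi_one Φ Ψ hadj htrp
    have hpsi_tr : ∀ x, (Ψ x).trace = x.trace := StmtAux.psi_trace Φ Ψ hadj hone
    -- Φ maps the spectral projections of D onto those of Φ D, fiberwise
    have hPQ : ∀ t : ℝ,
        Φ (∑ j ∈ Finset.univ.filter (fun j => hD.1.eigenvalues j = t), StmtAux.sproj hD.1 j) =
        ∑ i ∈ Finset.univ.filter (fun i => hH.eigenvalues i = t), StmtAux.sproj hH i := by
      intro t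
      refine StmtAux.map_proj_eq Φ hpos hone htrp (StmtAux.psum_posSemidef hD.1 _)
        (StmtAux.one_sub_psum_posSemidef hD.1 _) (StmtAux.psum_posSemidef hH _)
        (StmtAux.one_sub_psum_posSemidef hH _) (StmtAux.psum_mul_psum hH _) ?_ ?_
      · rw [StmtAux.psum_trace, StmtAux.psum_trace, hcount t]
      · -- the trace condition
        rw [StmtAux.psum_trace]
        have expand : (∑ i ∈ Finset.univ.filter (fun i => hH.eigenvalues i = t),
            StmtAux.sproj hH i) *
            Φ (∑ j ∈ Finset.univ.filter (fun j => hD.1.eigenvalues j = t),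
              StmtAux.sproj hD.1 j) =
            ∑ i ∈ Finset.univ.filter (fun i => hH.eigenvalues i = t),
              ∑ j ∈ Finset.univ.filter (fun j => hD.1.eigenvalues j = t),
                StmtAux.sproj hH i * Φ (StmtAux.sproj hD.1 j) := by
          rw [map_sum, Finset.sum_mul]
          refine Finset.sum_congr rfl fun i _ => ?_
          rw [Matrix.mul_sum]
        rw [expand, Matrix.trace_sum]
        have : ∀ i ∈ Finset.univ.filter (fun i => hH.eigenvalues i = t),
            (∑ j ∈ Finset.univ.filter (fun j => hD.1.eigenvalues j = t),
              StmtAux.sproj hH i * Φ (StmtAux.sproj hD.1 j)).trace =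
            ((∑ j ∈ Finset.univ.filter (fun j => hD.1.eigenvalues j = t),
              ((StmtAux.sproj hH i * Φ (StmtAux.sproj hD.1 j)).trace).re : ℝ) : ℂ) := by
          intro i _
          rw [Matrix.trace_sum, Complex.ofReal_sum]
          exact Finset.sum_congr rfl fun j _ => (hreal i j).1
        rw [Finset.sum_congr rfl this, ← Complex.ofReal_sum, ← hsum t]
        norm_num [hcount t]
    -- Ψ maps them back
    have hQP : ∀ t : ℝ,
        Ψ (∑ i ∈ Finset.univ.filter (fun i => hH.eigenvalues i = t), StmtAux.sproj hH i) =
        ∑ j ∈ Finset.univ.filter (fun j => hD.1.eigenvalues j = t), StmtAux.sproj hD.1 j := by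
      intro t
      refine StmtAux.map_proj_eq Ψ hpsi_pos hpsi_one hpsi_tr (StmtAux.psum_posSemidef hH _)
        (StmtAux.one_sub_psum_posSemidef hH _) (StmtAux.psum_posSemidef hD.1 _)
        (StmtAux.one_sub_psum_posSemidef hD.1 _) (StmtAux.psum_mul_psum hD.1 _) ?_ ?_
      · rw [StmtAux.psum_trace, StmtAux.psum_trace, hcount t]
      · rw [hadj, hPQ t, StmtAux.psum_mul_psum hH]
    -- decompose D and Φ D fiberwise
    have hDdec : ∑ t ∈ (Finset.image hD.1.eigenvalues Finset.univ ∪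
        Finset.image hH.eigenvalues Finset.univ), (t : ℂ) •
        ∑ j ∈ Finset.univ.filter (fun j => hD.1.eigenvalues j = t), StmtAux.sproj hD.1 j = D := by
      have h1 : ∀ t ∈ (Finset.image hD.1.eigenvalues Finset.univ ∪
          Finset.image hH.eigenvalues Finset.univ), (t : ℂ) •
          ∑ j ∈ Finset.univ.filter (fun j => hD.1.eigenvalues j = t), StmtAux.sproj hD.1 j =
          ∑ j ∈ Finset.univ.filter (fun j => hD.1.eigenvalues j = t),
            (hD.1.eigenvalues j : ℂ) • StmtAux.sproj hD.1 j := by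
        intro t _
        rw [Finset.smul_sum]
        exact Finset.sum_congr rfl fun j hj => by
          rw [(Finset.mem_filter.mp hj).2]
      rw [Finset.sum_congr rfl h1,
        Finset.sum_fiberwise_of_maps_to (fun j _ => Finset.mem_union_left _
          (Finset.mem_image_of_mem _ (Finset.mem_univ j)))]
      exact (StmtAux.sproj_spectral hD.1).symm
    have hΦDdec : ∑ t ∈ (Finset.image hD.1.eigenvalues Finset.univ ∪
        Finset.image hH.eigenvalues Finset.univ), (t : ℂ) •
        ∑ i ∈ Finset.univ.filter (fun i => hH.eigenvalues i = t), StmtAux.sproj hH i = Φ D := by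
      have h1 : ∀ t ∈ (Finset.image hD.1.eigenvalues Finset.univ ∪
          Finset.image hH.eigenvalues Finset.univ), (t : ℂ) •
          ∑ i ∈ Finset.univ.filter (fun i => hH.eigenvalues i = t), StmtAux.sproj hH i =
          ∑ i ∈ Finset.univ.filter (fun i => hH.eigenvalues i = t),
            (hH.eigenvalues i : ℂ) • StmtAux.sproj hH i := by
        intro t _
        rw [Finset.smul_sum]
        exact Finset.sum_congr rfl fun i hi => by
          rw [(Finset.mem_filter.mp hi).2]
      rw [Finset.sum_congr rfl h1,
        Finset.sum_fiberwise_of_maps_to (fun i _ => Finset.mem_union_right _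
          (Finset.mem_image_of_mem _ (Finset.mem_univ i)))]
      exact (StmtAux.sproj_spectral hH).symm
    calc Ψ (Φ D)
        = Ψ (∑ t ∈ (Finset.image hD.1.eigenvalues Finset.univ ∪
            Finset.image hH.eigenvalues Finset.univ), (t : ℂ) •
            ∑ i ∈ Finset.univ.filter (fun i => hH.eigenvalues i = t), StmtAux.sproj hH i) := by
          rw [hΦDdec]
      _ = ∑ t ∈ (Finset.image hD.1.eigenvalues Finset.univ ∪
            Finset.image hH.eigenvalues Finset.univ), (t : ℂ) •
            Ψ (∑ i ∈ Finset.univ.filter (fun i => hH.eigenvalues i = t), StmtAux.sproj hH i) := by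
          rw [map_sum]
          exact Finset.sum_congr rfl fun t _ => by rw [_root_.map_smul]
      _ = ∑ t ∈ (Finset.image hD.1.eigenvalues Finset.univ ∪
            Finset.image hH.eigenvalues Finset.univ), (t : ℂ) •
            ∑ j ∈ Finset.univ.filter (fun j => hD.1.eigenvalues j = t), StmtAux.sproj hD.1 j := by
          exact Finset.sum_congr rfl fun t _ => by rw [hQP t]
      _ = D := hDdec
  tfae_finish
end

section
/- With the notation of the paper, H^λ(b_ρ(Φ)) = S(Φ(D_ρ)) if and only if b_{ij} = μⱼ for every j and every i with λᵢ ≠ 0. -/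
open Matrix BigOperators ComplexOrder

open Polynomial

set_option linter.unnecessarySimpa false
set_option linter.unusedVariables false
set_option linter.unusedTactic false

-- charpoly invariance under conjugation
lemma charpoly_conj_aux {n : ℕ} (U V M : Matrix (Fin n) (Fin n) ℂ)
    (hUV : U * V = 1) : (U * M * V).charpoly = M.charpoly := by
  have hmap : ∀ A B : Matrix (Fin n) (Fin n) ℂ,
      (A * B).map (C : ℂ →+* ℂ[X]) = A.map C * B.map C := fun A B => by
    simpa using (RingHom.mapMatrix (C : ℂ →+* ℂ[X])).map_mul A B
  have h1 : (U.map (C : ℂ →+* ℂ[X])) * (V.map C) = 1 := by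
    rw [← hmap, hUV]
    simpa using (RingHom.mapMatrix (C : ℂ →+* ℂ[X])).map_one
  have hcm : charmatrix (U * M * V) = U.map C * charmatrix M * V.map C := by
    rw [charmatrix, charmatrix]
    rw [mul_sub, sub_mul]
    congr 1
    · -- U.map C * scalar X * V.map C = scalar X
      rw [scalar_commute X (fun r => (Commute.all _ _)) (U.map C) |>.symm.eq]
      rw [mul_assoc, h1, mul_one]
    · simp only [RingHom.mapMatrix_apply]
      rw [hmap, hmap, mul_assoc]
  rw [Matrix.charpoly, Matrix.charpoly, hcm, det_mul, det_mul]
  have : (U.map (C : ℂ →+* ℂ[X])).det * (V.map C).det = 1 := by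
    rw [← det_mul, h1, det_one]
  rw [mul_comm ((U.map (C : ℂ →+* ℂ[X])).det), mul_assoc, this, mul_one]

lemma charpoly_diag {n : ℕ} (d : Fin n → ℂ) :
    (diagonal d).charpoly = ∏ i, (X - C (d i)) := by
  rw [Matrix.charpoly_of_upperTriangular _ (Matrix.blockTriangular_diagonal d)]
  simp

lemma sum_f_eq_of_prod {n : ℕ} (ν μ : Fin n → ℝ) (f : ℝ → ℝ)
    (h : ∏ i, (X - C ((ν i : ℂ))) = ∏ i, (X - C ((μ i : ℂ)))) :
    ∑ i, f (ν i) = ∑ i, f (μ i) := by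
  have h2 : (Finset.univ.val.map fun i => ((ν i : ℂ))) =
      (Finset.univ.val.map fun i => ((μ i : ℂ))) := by
    have := congrArg Polynomial.roots h
    rwa [Finset.prod_eq_multiset_prod, Finset.prod_eq_multiset_prod,
      show (Multiset.map (fun i => X - C ((ν i : ℂ))) Finset.univ.val)
          = Multiset.map (fun a : ℂ => X - C a) (Finset.univ.val.map fun i => ((ν i : ℂ)))
        by rw [Multiset.map_map]; rfl,
      show (Multiset.map (fun i => X - C ((μ i : ℂ))) Finset.univ.val)
          = Multiset.map (fun a : ℂ => X - C a) (Finset.univ.val.map fun i => ((μ i : ℂ)))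
        by rw [Multiset.map_map]; rfl,
      roots_multiset_prod_X_sub_C, roots_multiset_prod_X_sub_C] at this
  have h3 := congrArg (Multiset.map (fun z : ℂ => f z.re)) h2
  rw [Multiset.map_map, Multiset.map_map] at h3
  have h4 := congrArg Multiset.sum h3
  simpa [Function.comp, Finset.sum] using h4

theorem posSemidef_iff_eq_transpose_mul_self {n : ℕ} {A : Matrix (Fin n) (Fin n) ℂ} :
    A.PosSemidef ↔ ∃ B : Matrix (Fin n) (Fin n) ℂ, A = Bᴴ * B := by
  open scoped MatrixOrder in
  constructor
  · intro hA
    obtain ⟨B, hB⟩ := CStarAlgebra.nonneg_iff_eq_star_mul_self.mp hA.nonneg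
    exact ⟨B, hB⟩
  · rintro ⟨B, rfl⟩
    exact posSemidef_conjTranspose_mul_self B

lemma trace_psd_mul_nonneg {n : ℕ} {X Y : Matrix (Fin n) (Fin n) ℂ}
    (hX : X.PosSemidef) (hY : Y.PosSemidef) : 0 ≤ (X * Y).trace := by
  obtain ⟨B, rfl⟩ := posSemidef_iff_eq_transpose_mul_self.mp hX
  obtain ⟨Cm, rfl⟩ := posSemidef_iff_eq_transpose_mul_self.mp hY
  have h1 : (Bᴴ * B * (Cmᴴ * Cm)).trace = ((B * Cmᴴ)ᴴ * (B * Cmᴴ)).trace := by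
    rw [conjTranspose_mul, conjTranspose_conjTranspose]
    rw [show Bᴴ * B * (Cmᴴ * Cm) = Bᴴ * (B * Cmᴴ * Cm) from by simp only [Matrix.mul_assoc]]
    simp only [Matrix.mul_assoc]
    rw [Matrix.trace_mul_comm Bᴴ]
    simp only [Matrix.mul_assoc]
    rw [Matrix.trace_mul_comm B]
    simp only [Matrix.mul_assoc]
    rw [Matrix.trace_mul_comm Cmᴴ]
    simp only [Matrix.mul_assoc]
  rw [h1]
  set M := B * Cmᴴ
  have h2 : (Mᴴ * M).trace = ((∑ j, ∑ c, Complex.normSq (M c j) : ℝ) : ℂ) := by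
    rw [Matrix.trace]
    push_cast
    refine Finset.sum_congr rfl fun j _ => ?_
    rw [Matrix.diag_apply, Matrix.mul_apply]
    push_cast
    refine Finset.sum_congr rfl fun c _ => ?_
    rw [Matrix.conjTranspose_apply]
    simpa [mul_comm] using Complex.mul_conj (M c j)
  rw [h2]
  rw [Complex.zero_le_real]
  exact Finset.sum_nonneg fun j _ => Finset.sum_nonneg fun c _ => Complex.normSq_nonneg _

-- diagonal entries of hermitian idempotent as sum of normSq
lemma herm_idem_diag {n : ℕ} (q : Matrix (Fin n) (Fin n) ℂ) (hH : q.IsHermitian)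
    (h2 : q * q = q) (a : Fin n) :
    q a a = ((∑ c, Complex.normSq (q a c) : ℝ) : ℂ) := by
  have hqH : q * qᴴ = q := by rw [hH.eq, h2]
  have := congrFun (congrFun hqH a) a
  rw [Matrix.mul_apply] at this
  rw [← this]
  push_cast
  refine Finset.sum_congr rfl fun c _ => ?_
  rw [Matrix.conjTranspose_apply]
  simpa using Complex.mul_conj (q a c)

-- a hermitian idempotent with trace zero is zero
lemma herm_idem_trace_zero {n : ℕ} (q : Matrix (Fin n) (Fin n) ℂ) (hH : q.IsHermitian)
    (h2 : q * q = q) (htr : q.trace = 0) : q = 0 := by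
  have hsum : (∑ a, ∑ c, Complex.normSq (q a c)) = 0 := by
    have : q.trace = ((∑ a, ∑ c, Complex.normSq (q a c) : ℝ) : ℂ) := by
      rw [Matrix.trace]
      push_cast
      exact Finset.sum_congr rfl fun a _ => by
        simpa using herm_idem_diag q hH h2 a
    rw [htr] at this
    exact_mod_cast this.symm
  have hz : ∀ a ∈ Finset.univ, ∀ c ∈ Finset.univ, Complex.normSq (q a c) = 0 := by
    intro a _ c _
    have h1 : ∀ a ∈ Finset.univ, (0:ℝ) ≤ ∑ c, Complex.normSq (q a c) :=
      fun a _ => Finset.sum_nonneg fun c _ => Complex.normSq_nonneg _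
    have h2' := (Finset.sum_eq_zero_iff_of_nonneg h1).mp hsum a (Finset.mem_univ a)
    exact (Finset.sum_eq_zero_iff_of_nonneg
      (fun c _ => Complex.normSq_nonneg _)).mp h2' c (Finset.mem_univ c)
  ext a c
  simpa using Complex.normSq_eq_zero.mp (hz a (Finset.mem_univ a) c (Finset.mem_univ c))

-- rank-one extraction
lemma rankone_vec {n : ℕ} (p : Matrix (Fin n) (Fin n) ℂ) (hH : p.IsHermitian)
    (h2 : p * p = p) (htr : p.trace = 1) :
    ∃ v : Fin n → ℂ, ∀ a b, p a b = v a * (starRingEnd ℂ) (v b) := by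
  -- find k with p k k ≠ 0
  have hk : ∃ k, p k k ≠ 0 := by
    by_contra hall
    push_neg at hall
    rw [Matrix.trace] at htr
    simp [hall] at htr
  obtain ⟨k, hk⟩ := hk
  set t : ℝ := ∑ c, Complex.normSq (p k c) with ht_def
  have hdiag := herm_idem_diag p hH h2 k
  have ht : p k k = (t : ℂ) := hdiag
  have ht0 : 0 < t :=
    lt_of_le_of_ne (Finset.sum_nonneg fun c _ => Complex.normSq_nonneg _)
      (fun h => hk (by rw [ht, ← h]; simp))
  have htne : (t : ℂ) ≠ 0 := by exact_mod_cast ht0.ne'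
  -- the rank-one candidate
  set r : Matrix (Fin n) (Fin n) ℂ := Matrix.of fun a b => p a k * p k b / (t : ℂ) with hr_def
  have hherm : ∀ a b, (starRingEnd ℂ) (p a b) = p b a := fun a b => hH.apply b a
  have hpp : ∀ a b, ∑ c, p a c * p c b = p a b := fun a b => by
    have := congrFun (congrFun h2 a) b; rwa [Matrix.mul_apply] at this
  have hpr : p * r = r := by
    ext a b
    rw [Matrix.mul_apply]
    simp only [hr_def, Matrix.of_apply]
    rw [show (∑ c, p a c * (p c k * p k b / (t:ℂ))) =
      (∑ c, p a c * p c k) * (p k b / (t:ℂ)) from by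
        rw [Finset.sum_mul]; exact Finset.sum_congr rfl fun c _ => by ring]
    rw [hpp]
    ring
  have hrp : r * p = r := by
    ext a b
    rw [Matrix.mul_apply]
    simp only [hr_def, Matrix.of_apply]
    rw [show (∑ c, p a k * p k c / (t:ℂ) * p c b) =
      (p a k / (t:ℂ)) * (∑ c, p k c * p c b) from by
        rw [Finset.mul_sum]; exact Finset.sum_congr rfl fun c _ => by ring]
    rw [hpp]
    ring
  have hrr : r * r = r := by
    ext a b
    rw [Matrix.mul_apply]
    simp only [hr_def, Matrix.of_apply]
    rw [show (∑ c, p a k * p k c / (t:ℂ) * (p c k * p k b / (t:ℂ))) =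
      (p a k * p k b / (t:ℂ) / (t:ℂ)) * (∑ c, p k c * p c k) from by
        rw [Finset.mul_sum]; exact Finset.sum_congr rfl fun c _ => by ring]
    rw [hpp, ht]
    field_simp
  have hrH : r.IsHermitian := by
    ext a b
    rw [Matrix.conjTranspose_apply]
    simp only [hr_def, Matrix.of_apply]
    show (starRingEnd ℂ) (p b k * p k a / (t:ℂ)) = p a k * p k b / (t:ℂ)
    rw [map_div₀, _root_.map_mul, hherm, hherm, Complex.conj_ofReal]
    ring
  have hrtr : r.trace = 1 := by
    rw [Matrix.trace]
    simp only [hr_def, Matrix.of_apply, Matrix.diag_apply]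
    rw [show (∑ a, p a k * p k a / (t:ℂ)) = (∑ a, p k a * p a k) / (t:ℂ) from by
      rw [Finset.sum_div]; exact Finset.sum_congr rfl fun a _ => by ring]
    rw [hpp, ht]
    field_simp
  -- q := p - r is hermitian idempotent with trace 0
  have hq : p - r = 0 := by
    apply herm_idem_trace_zero _ (hH.sub hrH)
    · rw [sub_mul, mul_sub, mul_sub, h2, hpr, hrp, hrr]
      abel
    · rw [Matrix.trace_sub, htr, hrtr, sub_self]
  have hpr' : p = r := by rwa [sub_eq_zero] at hq
  -- now extract the vector
  refine ⟨fun a => p a k / (Real.sqrt t : ℂ), fun a b => ?_⟩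
  rw [map_div₀, hherm, Complex.conj_ofReal]
  have heq := congrFun (congrFun hpr' a) b
  rw [heq]
  simp only [hr_def, Matrix.of_apply]
  rw [div_mul_div_comm, ← Complex.ofReal_mul, Real.mul_self_sqrt ht0.le]

lemma spectral_family_unitary {n : ℕ} (p : Fin n → Matrix (Fin n) (Fin n) ℂ)
    (hp : IsSpectralFamily p) (μ : Fin n → ℝ) :
    ∃ V : Matrix (Fin n) (Fin n) ℂ, V * Vᴴ = 1 ∧ Vᴴ * V = 1 ∧
      ∑ j, (μ j : ℂ) • p j = V * diagonal (fun j => (μ j : ℂ)) * Vᴴ := by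
  obtain ⟨hH, horth, hsum, htr⟩ := hp
  have hidem : ∀ j, p j * p j = p j := fun j => by simpa using horth j j
  choose v hv using fun j => rankone_vec (p j) (hH j) (hidem j) (htr j)
  -- norm one
  have hnorm : ∀ j, ∑ a, (starRingEnd ℂ) (v j a) * v j a = 1 := by
    intro j
    have := htr j
    rw [Matrix.trace] at this
    rw [← this]
    exact Finset.sum_congr rfl fun a _ => by rw [Matrix.diag_apply, hv j a a]; ring
  have hvne : ∀ j, ∃ a, v j a ≠ 0 := by
    intro j
    by_contra hall
    push_neg at hall
    have := hnorm j
    simp [hall] at this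
  -- orthogonality
  have horthv : ∀ i j, i ≠ j → ∑ a, (starRingEnd ℂ) (v i a) * v j a = 0 := by
    intro i j hij
    obtain ⟨a, ha⟩ := hvne i
    obtain ⟨c, hc⟩ := hvne j
    have h0 : p i * p j = 0 := by simpa [hij] using horth i j
    have := congrFun (congrFun h0 a) c
    rw [Matrix.mul_apply] at this
    simp only [Matrix.zero_apply] at this
    have key : v i a * (starRingEnd ℂ) (v j c) *
        (∑ x, (starRingEnd ℂ) (v i x) * v j x) = 0 := by
      rw [← this, Finset.mul_sum]
      exact Finset.sum_congr rfl fun x _ => by rw [hv i a x, hv j x c]; ring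
    rcases mul_eq_zero.mp key with h | h
    · rcases mul_eq_zero.mp h with h' | h'
      · exact absurd h' ha
      · rw [starRingEnd_apply, star_eq_zero] at h'
        exact absurd h' hc
    · exact h
  set V : Matrix (Fin n) (Fin n) ℂ := Matrix.of fun a j => v j a with hV
  have hVV : Vᴴ * V = 1 := by
    ext i j
    rw [Matrix.mul_apply, Matrix.one_apply]
    have h' : ∀ a, Vᴴ i a * V a j = (starRingEnd ℂ) (v i a) * v j a := fun a => by
      rw [Matrix.conjTranspose_apply]; rfl
    rw [Finset.sum_congr rfl fun a _ => h' a]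
    by_cases hij : i = j
    · subst hij; rw [hnorm, if_pos rfl]
    · rw [horthv i j hij, if_neg hij]
  refine ⟨V, mul_eq_one_comm.mpr hVV, hVV, ?_⟩
  ext a c
  rw [Matrix.mul_apply]
  have hL : (∑ j, (μ j : ℂ) • p j) a c = ∑ j, (μ j : ℂ) * p j a c := by
    simp [Matrix.sum_apply]
  rw [hL]
  refine Finset.sum_congr rfl fun j _ => ?_
  rw [Matrix.mul_diagonal, Matrix.conjTranspose_apply, hv j a c]
  simp only [hV, Matrix.of_apply, starRingEnd_apply]
  ring

lemma vnEntropy_eq_sum {n : ℕ} (A : Matrix (Fin n) (Fin n) ℂ) (hA : A.IsHermitian)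
    (μ : Fin n → ℝ) (V : Matrix (Fin n) (Fin n) ℂ)
    (hV1 : V * Vᴴ = 1) (hV2 : Vᴴ * V = 1)
    (hdec : A = V * diagonal (fun j => (μ j : ℂ)) * Vᴴ) :
    vnEntropy A = ∑ j, eta (μ j) := by
  set U : Matrix (Fin n) (Fin n) ℂ := (hA.eigenvectorUnitary : Matrix (Fin n) (Fin n) ℂ)
    with hUdef
  have hU2 : star U * U = 1 := mem_unitaryGroup_iff'.mp hA.eigenvectorUnitary.2
  have hU1 : U * star U = 1 := mem_unitaryGroup_iff.mp hA.eigenvectorUnitary.2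
  have hco : (RCLike.ofReal ∘ hA.eigenvalues : Fin n → ℂ)
      = fun i => ((hA.eigenvalues i : ℝ) : ℂ) := funext fun i => rfl
  have hspec : A = U * diagonal (fun i => ((hA.eigenvalues i : ℝ) : ℂ)) * star U := by
    rw [← hco]
    exact hA.spectral_theorem
  have hW : (star U * V) * (Vᴴ * U) = 1 := by
    rw [mul_assoc, ← mul_assoc V, hV1, one_mul, hU2]
  have hkey : diagonal (fun i => ((hA.eigenvalues i : ℝ) : ℂ)) =
      (star U * V) * diagonal (fun j => (μ j : ℂ)) * (Vᴴ * U) := by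
    have h1 : star U * A * U = diagonal (fun i => ((hA.eigenvalues i : ℝ) : ℂ)) := by
      conv_lhs => rw [hspec]
      calc star U * (U * diagonal (fun i => ((hA.eigenvalues i : ℝ) : ℂ)) * star U) * U
          = (star U * U) * diagonal (fun i => ((hA.eigenvalues i : ℝ) : ℂ)) * (star U * U) := by
            simp only [Matrix.mul_assoc]
        _ = _ := by rw [hU2, one_mul, mul_one]
    rw [← h1]
    conv_lhs => rw [hdec]
    simp only [Matrix.mul_assoc]
  have hcp : (diagonal (fun i => ((hA.eigenvalues i : ℝ) : ℂ))).charpoly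
      = (diagonal (fun j => (μ j : ℂ))).charpoly := by
    rw [hkey]
    exact charpoly_conj_aux _ _ _ hW
  rw [charpoly_diag, charpoly_diag] at hcp
  have hfin := sum_f_eq_of_prod hA.eigenvalues μ eta hcp
  rw [vnEntropy, dif_pos hA]
  exact hfin

lemma eta_eq_negMulLog : _root_.eta = Real.negMulLog := by
  funext t
  unfold _root_.eta Real.negMulLog
  ring

theorem stmt_15 {n : ℕ} (Φ : Matrix (Fin n) (Fin n) ℂ →ₗ[ℂ] Matrix (Fin n) (Fin n) ℂ)
    (hΦ : IsPUTP Φ)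
    (D : Matrix (Fin n) (Fin n) ℂ) (hD : D.PosSemidef) (htr : D.trace = 1)
    (lam mu : Fin n → ℝ) (e p : Fin n → Matrix (Fin n) (Fin n) ℂ)
    (he : IsSpectralFamily e) (hp : IsSpectralFamily p)
    (hDdec : D = ∑ i, (lam i : ℂ) • e i)
    (hΦDdec : Φ D = ∑ j, (mu j : ℂ) • p j)
    (b : Fin n → Fin n → ℝ)
    (hb : ∀ i j, (b i j : ℂ) = (Φ (e i) * p j).trace) :
    (∑ i, lam i * ∑ j, eta (b i j)) = vnEntropy (Φ D) ↔
      ∀ i j, lam i ≠ 0 → b i j = mu j := by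
  obtain ⟨hΦpos, hΦ1, hΦtr⟩ := hΦ
  obtain ⟨heH, heO, heS, heT⟩ := he
  have hpH := hp.1
  have hpO := hp.2.1
  have hpT := hp.2.2.2
  -- PSD facts
  have hepsd : ∀ i, (e i).PosSemidef := fun i =>
    posSemidef_iff_eq_transpose_mul_self.mpr
      ⟨e i, by rw [(heH i).eq]; simpa using (heO i i).symm⟩
  have hppsd : ∀ j, (p j).PosSemidef := fun j =>
    posSemidef_iff_eq_transpose_mul_self.mpr
      ⟨p j, by rw [(hpH j).eq]; simpa using (hpO j j).symm⟩
  -- trace computations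
  have hDe : ∀ i, (D * e i).trace = (lam i : ℂ) := by
    intro i
    rw [hDdec, Finset.sum_mul, Matrix.trace_sum]
    simp only [smul_mul_assoc, heO, Matrix.trace_smul]
    rw [Finset.sum_eq_single i]
    · rw [if_pos rfl, heT i]; simp
    · intro k _ hk; rw [if_neg hk]; simp
    · simp
  have hΦDp : ∀ j, (Φ D * p j).trace = (mu j : ℂ) := by
    intro j
    rw [hΦDdec, Finset.sum_mul, Matrix.trace_sum]
    simp only [smul_mul_assoc, hpO, Matrix.trace_smul]
    rw [Finset.sum_eq_single j]
    · rw [if_pos rfl, hpT j]; simp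
    · intro k _ hk; rw [if_neg hk]; simp
    · simp
  have hΦDp' : ∀ j, (Φ D * p j).trace = ∑ i, (lam i : ℂ) * (b i j : ℂ) := by
    intro j
    conv_lhs => rw [hDdec]
    rw [map_sum, Finset.sum_mul, Matrix.trace_sum]
    refine Finset.sum_congr rfl fun i _ => ?_
    rw [LinearMap.map_smul, smul_mul_assoc, Matrix.trace_smul, ← hb]
    simp
  -- lam sums to 1
  have hlam_sum : ∑ i, lam i = 1 := by
    have h1 : D.trace = ((∑ i, lam i : ℝ) : ℂ) := by
      rw [hDdec, Matrix.trace_sum]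
      push_cast
      exact Finset.sum_congr rfl fun i _ => by rw [Matrix.trace_smul, heT i]; simp
    rw [htr] at h1
    exact_mod_cast h1.symm
  -- lam nonneg
  have hlam_nonneg : ∀ i, 0 ≤ lam i := by
    intro i
    have := trace_psd_mul_nonneg hD (hepsd i)
    rw [hDe i] at this
    exact Complex.zero_le_real.mp this
  -- b nonneg
  have hbnn : ∀ i j, 0 ≤ b i j := by
    intro i j
    have := trace_psd_mul_nonneg (hΦpos _ (hepsd i)) (hppsd j)
    rw [← hb i j] at this
    exact Complex.zero_le_real.mp this
  -- mu identities
  have hmu : ∀ j, mu j = ∑ i, lam i * b i j := by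
    intro j
    have h1 := (hΦDp j).symm.trans (hΦDp' j)
    have : ((mu j : ℝ) : ℂ) = ((∑ i, lam i * b i j : ℝ) : ℂ) := by
      rw [h1]; push_cast; ring_nf
    exact_mod_cast this
  -- vnEntropy value
  have hvn : vnEntropy (Φ D) = ∑ j, eta (mu j) := by
    obtain ⟨V, hV1, hV2, hVdec⟩ := spectral_family_unitary p hp mu
    exact vnEntropy_eq_sum (Φ D) (hΦpos D hD).1 mu V hV1 hV2 (hΦDdec.trans hVdec)
  -- Jensen setup
  set t : Finset (Fin n) := Finset.univ.filter (fun i => lam i ≠ 0) with ht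
  have hmem_t : ∀ i, i ∈ t ↔ lam i ≠ 0 := fun i => by simp [ht]
  have hsum_t : ∑ i ∈ t, lam i = 1 := by
    rw [ht, Finset.sum_filter_ne_zero]; exact hlam_sum
  have hpos_t : ∀ i ∈ t, 0 < lam i := fun i hi =>
    lt_of_le_of_ne (hlam_nonneg i) (Ne.symm ((hmem_t i).mp hi))
  have hmu_t : ∀ j, ∑ i ∈ t, lam i * b i j = mu j := by
    intro j
    rw [hmu j, ht]
    apply Finset.sum_filter_of_ne
    intro x _ hx
    intro h0
    rw [h0] at hx
    simp at hx
  have heta_t : ∀ j, ∑ i ∈ t, lam i * eta (b i j) = ∑ i, lam i * eta (b i j) := by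
    intro j
    rw [ht]
    apply Finset.sum_filter_of_ne
    intro x _ hx h0
    rw [h0] at hx
    simp at hx
  -- Jensen: inequality and equality condition
  have hjen : ∀ j, (∑ i ∈ t, lam i * eta (b i j) = eta (mu j)) ↔
      ∀ i ∈ t, b i j = mu j := by
    intro j
    have key := Real.strictConcaveOn_negMulLog.map_sum_eq_iff hpos_t hsum_t
      (p := fun i => b i j) (fun i _ => hbnn i j)
    simp only [smul_eq_mul] at key
    rw [hmu_t j, ← eta_eq_negMulLog] at key
    constructor
    · intro h
      intro i hi
      exact (key.mp h.symm) i hi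
    · intro h
      refine (key.mpr ?_).symm
      intro i hi
      exact h i hi
  have hle : ∀ j ∈ Finset.univ, ∑ i ∈ t, lam i * eta (b i j) ≤ eta (mu j) := by
    intro j _
    have key := Real.strictConcaveOn_negMulLog.concaveOn.le_map_sum
      (fun i hi => (hpos_t i hi).le) hsum_t (p := fun i => b i j) (fun i _ => hbnn i j)
    simp only [smul_eq_mul] at key
    rwa [hmu_t j, ← eta_eq_negMulLog] at key
  -- rewrite LHS
  have hLHS : (∑ i, lam i * ∑ j, eta (b i j)) = ∑ j, ∑ i ∈ t, lam i * eta (b i j) := by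
    simp_rw [Finset.mul_sum]
    rw [Finset.sum_comm]
    exact Finset.sum_congr rfl fun j _ => (heta_t j).symm
  rw [hLHS, hvn]
  rw [Finset.sum_eq_sum_iff_of_le hle]
  constructor
  · intro h i j hlam
    exact (hjen j).mp (h j (Finset.mem_univ j)) i ((hmem_t i).mpr hlam)
  · intro h j _
    exact (hjen j).mpr fun i hi => h i j ((hmem_t i).mp hi)
end
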